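/- arXiv:1707.08735 — 10 statements merged into one kernel-verified Lean document; each statement's English description precedes it below -/
import Mathlib

section
/- Let M = ⟨W, {R_a}_{a∈Ag}, V⟩ be a Kripke model (each R_a an equivalence relation on W), w ∈ W a world, ψ a GLAL formula, and A ⊆ Ag a coalition. Then for every agent a ∈ Ag, the relation R⁻_a of the refinement M⁻_(w,ψ,A) and the relation R⁺_a of the refinement M⁺_(w,ψ,A) are equivalence relations on W. -/
/-- Formulas of GLAL: atoms, negation, conjunction, common knowledge `C_A`,
global announcement `[φ]⁺_A ψ` (`annP`) and local announcement `[φ]⁻_A ψ` (`annM`). -/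
inductive Form (AP Ag : Type) : Type
  | atom : AP → Form AP Ag
  | neg  : Form AP Ag → Form AP Ag
  | and  : Form AP Ag → Form AP Ag → Form AP Ag
  | ck   : Set Ag → Form AP Ag → Form AP Ag
  | annP : Form AP Ag → Set Ag → Form AP Ag → Form AP Ag
  | annM : Form AP Ag → Set Ag → Form AP Ag → Form AP Ag

/-- A Kripke model over worlds `W`: a relation for each agent and a valuation.
(The requirement that each relation is an equivalence relation is stated
separately, as a hypothesis, where needed.) -/
structure KModel (AP Ag W : Type) where
  R : Ag → W → W → Prop
  V : AP → Set W

variable {AP Ag : Type}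

/-- `R^C_A`: the reflexive-transitive closure of the union of the relations
of the agents in `A`. -/
def ckRel {W : Type} (M : KModel AP Ag W) (A : Set Ag) : W → W → Prop :=
  Relation.ReflTransGen (fun v u => ∃ a ∈ A, M.R a v u)

/-- The local refinement `M⁻_(w,X,A)` of `M` w.r.t. world `w`, a set `X` of worlds
(the satisfaction set of the announced formula) and coalition `A`:
for `a ∉ A` the relation is unchanged; for `a ∈ A`, if `v ∈ R_a(w)` then the
equivalence class of `v` is split according to membership in `X`. -/
def KModel.refM {W : Type} (M : KModel AP Ag W) (w : W) (X : Set W) (A : Set Ag) :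
    KModel AP Ag W where
  R a v u := M.R a v u ∧ (a ∈ A → M.R a w v → (v ∈ X ↔ u ∈ X))
  V := M.V

/-- The global refinement `M⁺_(w,X,A)`: as the local one, but with test set
`R^C_A(w)` instead of `R_a(w)`. -/
def KModel.refP {W : Type} (M : KModel AP Ag W) (w : W) (X : Set W) (A : Set Ag) :
    KModel AP Ag W where
  R a v u := M.R a v u ∧ (a ∈ A → ckRel M A w v → (v ∈ X ↔ u ∈ X))
  V := M.V

/-- GLAL satisfaction `(M,w) ⊨ φ`. -/
def sat {W : Type} : Form AP Ag → KModel AP Ag W → W → Prop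
  | .atom p, M, w => w ∈ M.V p
  | .neg φ, M, w => ¬ sat φ M w
  | .and φ ψ, M, w => sat φ M w ∧ sat ψ M w
  | .ck A φ, M, w => ∀ v, ckRel M A w v → sat φ M v
  | .annM φ A ψ, M, w => sat φ M w → sat ψ (M.refM w {v | sat φ M v} A) w
  | .annP φ A ψ, M, w => sat φ M w → sat ψ (M.refP w {v | sat φ M v} A) w

/-- Validity: truth at every world of every Kripke model (all of whose
relations are equivalence relations). -/
def Valid (φ : Form AP Ag) : Prop :=
  ∀ (W : Type) (M : KModel AP Ag W), (∀ a, Equivalence (M.R a)) → ∀ w : W, sat φ M w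

/-- `φ → ψ` as the usual abbreviation `¬(φ ∧ ¬ψ)`. -/
def Form.impl (φ ψ : Form AP Ag) : Form AP Ag := .neg (.and φ (.neg ψ))

/-- `φ ↔ ψ` as the usual abbreviation. -/
def Form.biimpl (φ ψ : Form AP Ag) : Form AP Ag := .and (φ.impl ψ) (ψ.impl φ)

/-- Both refined relations of `M⁻_(w,ψ,A)` and `M⁺_(w,ψ,A)`
are equivalence relations, provided all relations of `M` are. -/
theorem refinement_equivalence {W : Type} [Fintype Ag]
    (M : KModel AP Ag W) (hM : ∀ a : Ag, Equivalence (M.R a))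
    (w : W) (ψ : Form AP Ag) (A : Set Ag) :
    ∀ a : Ag,
      Equivalence ((M.refM w {v | sat ψ M v} A).R a) ∧
      Equivalence ((M.refP w {v | sat ψ M v} A).R a) := by
  intro a
  have ha := hM a
  constructor
  · constructor
    · intro x
      exact ⟨ha.refl x, fun _ _ => Iff.rfl⟩
    · rintro x y ⟨h1, h2⟩
      refine ⟨ha.symm h1, fun hA hwy => ?_⟩
      exact (h2 hA (ha.trans hwy (ha.symm h1))).symm
    · rintro x y z ⟨h1, h2⟩ ⟨h3, h4⟩
      refine ⟨ha.trans h1 h3, fun hA hwx => ?_⟩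
      exact (h2 hA hwx).trans (h4 hA (ha.trans hwx h1))
  · constructor
    · intro x
      exact ⟨ha.refl x, fun _ _ => Iff.rfl⟩
    · rintro x y ⟨h1, h2⟩
      refine ⟨ha.symm h1, fun hA hwy => ?_⟩
      have hwx : ckRel M A w x := hwy.tail ⟨a, hA, ha.symm h1⟩
      exact (h2 hA hwx).symm
    · rintro x y z ⟨h1, h2⟩ ⟨h3, h4⟩
      refine ⟨ha.trans h1 h3, fun hA hwx => ?_⟩
      exact (h2 hA hwx).trans (h4 hA (hwx.tail ⟨a, hA, h1⟩))
end

section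
/- For every PAL formula ψ, every Kripke model M, and every world w of M: (M,w) ⊨_PAL ψ if and only if (M,w) ⊨_GLAL tr(ψ), where tr is the translation from PAL into GLAL that commutes with atoms, negation, conjunction, and common knowledge operators, and maps tr([φ]φ') = [tr(φ)]⁺_Ag tr(φ'). -/
variable {AP Ag : Type}

/-- Formulas of PAL: atoms, negation, conjunction, common knowledge,
and public announcement `[φ]ψ`. -/
inductive PForm (AP Ag : Type) : Type
  | atom : AP → PForm AP Ag
  | neg  : PForm AP Ag → PForm AP Ag
  | and  : PForm AP Ag → PForm AP Ag → PForm AP Ag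
  | ck   : Set Ag → PForm AP Ag → PForm AP Ag
  | ann  : PForm AP Ag → PForm AP Ag → PForm AP Ag

/-- The restriction `M_X` of a model to a set `X` of worlds: worlds `W ∩ X`,
relations `R_a ∩ (X × X)` and valuation `V(p) ∩ X`. -/
def KModel.restrict {W : Type} (M : KModel AP Ag W) (X : Set W) :
    KModel AP Ag {v : W // v ∈ X} where
  R a v u := M.R a v.1 u.1
  V p := {v | v.1 ∈ M.V p}

/-- PAL satisfaction `(M,w) ⊨_PAL φ`. -/
def psat : PForm AP Ag → {W : Type} → KModel AP Ag W → W → Prop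
  | .atom p, _, M, w => w ∈ M.V p
  | .neg φ, _, M, w => ¬ psat φ M w
  | .and φ ψ, _, M, w => psat φ M w ∧ psat ψ M w
  | .ck A φ, _, M, w => ∀ v, ckRel M A w v → psat φ M v
  | .ann φ ψ, _, M, w => ∀ h : psat φ M w, psat ψ (M.restrict {v | psat φ M v}) ⟨w, h⟩

/-- The translation from PAL into GLAL: it commutes with atoms, negation,
conjunction and common knowledge, and maps `[φ]ψ` to `[tr φ]⁺_Ag (tr ψ)`. -/
def tr : PForm AP Ag → Form AP Ag
  | .atom p => .atom p
  | .neg φ => .neg (tr φ)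
  | .and φ ψ => .and (tr φ) (tr ψ)
  | .ck A φ => .ck A (tr φ)
  | .ann φ ψ => .annP (tr φ) Set.univ (tr ψ)

lemma ckRel_mono {W : Type} {M M' : KModel AP Ag W} {A B : Set Ag}
    (hA : A ⊆ B) (hR : ∀ a v u, M.R a v u → M'.R a v u) {v u : W}
    (h : ckRel M A v u) : ckRel M' B v u :=
  Relation.ReflTransGen.mono (fun x y ⟨a, ha, h⟩ => ⟨a, hA ha, hR a x y h⟩) v u h

lemma ckRel_map {W0 W : Type} {K : KModel AP Ag W0} {N : KModel AP Ag W}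
    {f : W0 → W} (hR : ∀ a x y, K.R a x y → N.R a (f x) (f y)) {A : Set Ag}
    {v u : W0} (h : ckRel K A v u) : ckRel N A (f v) (f u) := by
  induction h with
  | refl => exact Relation.ReflTransGen.refl
  | tail _ hstep ih =>
    obtain ⟨a, ha, hs⟩ := hstep
    exact ih.tail ⟨a, ha, hR _ _ _ hs⟩

lemma key (χ : PForm AP Ag) :
    ∀ {W0 W : Type} (K : KModel AP Ag W0) (N : KModel AP Ag W) (f : W0 → W),
    (∀ p x, x ∈ K.V p ↔ f x ∈ N.V p) →
    (∀ a x y, K.R a x y ↔ N.R a (f x) (f y)) →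
    ∀ v : W0,
    (∀ (a : Ag) (x : W0) (u : W),
        ckRel N Set.univ (f v) (f x) → N.R a (f x) u → u ∈ Set.range f) →
    (psat χ K v ↔ sat (tr χ) N (f v)) := by
  induction χ with
  | atom p =>
    intro W0 W K N f hV hR v hcl
    exact hV p v
  | neg φ ih =>
    intro W0 W K N f hV hR v hcl
    simp only [psat, tr, sat]
    exact not_congr (ih K N f hV hR v hcl)
  | and φ ψ ihφ ihψ =>
    intro W0 W K N f hV hR v hcl
    simp only [psat, tr, sat]
    exact and_congr (ihφ K N f hV hR v hcl) (ihψ K N f hV hR v hcl)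
  | ck A φ ih =>
    intro W0 W K N f hV hR v hcl
    have lift : ∀ u, ckRel N A (f v) u → ∃ u', u = f u' ∧ ckRel K A v u' := by
      intro u h
      induction h with
      | refl => exact ⟨v, rfl, Relation.ReflTransGen.refl⟩
      | tail hsteps hstep ih2 =>
        obtain ⟨m', rfl, hm⟩ := ih2
        obtain ⟨a, ha, hNa⟩ := hstep
        have hreach : ckRel N Set.univ (f v) (f m') :=
          ckRel_mono (Set.subset_univ A) (fun _ _ _ h => h) hsteps
        obtain ⟨u', rfl⟩ := hcl a m' _ hreach hNa
        exact ⟨u', rfl, hm.tail ⟨a, ha, (hR a m' u').2 hNa⟩⟩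
    simp only [psat, tr, sat]
    constructor
    · intro h u hu
      obtain ⟨u', rfl, hu'⟩ := lift u hu
      have hreach : ckRel N Set.univ (f v) (f u') :=
        ckRel_mono (Set.subset_univ A) (fun _ _ _ h => h)
          (ckRel_map (fun a x y h => (hR a x y).1 h) hu')
      exact (ih K N f hV hR u'
        (fun a x w hx hw => hcl a x w (hreach.trans hx) hw)).1 (h u' hu')
    · intro h u hu
      have hNu : ckRel N A (f v) (f u) :=
        ckRel_map (fun a x y h => (hR a x y).1 h) hu
      have hreach : ckRel N Set.univ (f v) (f u) :=
        ckRel_mono (Set.subset_univ A) (fun _ _ _ h => h) hNu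
      exact (ih K N f hV hR u
        (fun a x w hx hw => hcl a x w (hreach.trans hx) hw)).2 (h (f u) hNu)
  | ann φ ψ ihφ ihψ =>
    intro W0 W K N f hV hR v hcl
    have hφx : ∀ x, ckRel N Set.univ (f v) (f x) →
        (psat φ K x ↔ sat (tr φ) N (f x)) := fun x hx =>
      ihφ K N f hV hR x (fun a y u hy hu => hcl a y u (hx.trans hy) hu)
    have hφv : psat φ K v ↔ sat (tr φ) N (f v) :=
      hφx v Relation.ReflTransGen.refl
    set Y : Set W0 := {u | psat φ K u} with hY
    set Z : Set W := {u | sat (tr φ) N u} with hZ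
    set K' := K.restrict Y with hK'
    set N' := N.refP (f v) Z Set.univ with hN'
    set f' : {u : W0 // u ∈ Y} → W := fun x => f x.1 with hf'
    have hV' : ∀ p x, x ∈ K'.V p ↔ f' x ∈ N'.V p := fun p x => hV p x.1
    have hR' : ∀ a x y, K'.R a x y ↔ N'.R a (f' x) (f' y) := by
      intro a x y
      constructor
      · intro h
        refine ⟨(hR a x.1 y.1).1 h, fun _ hreach => ?_⟩
        have hyreach : ckRel N Set.univ (f v) (f y.1) :=
          hreach.tail ⟨a, Set.mem_univ a, (hR a x.1 y.1).1 h⟩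
        simp only [hZ, Set.mem_setOf_eq]
        rw [← hφx x.1 hreach, ← hφx y.1 hyreach]
        exact iff_of_true x.2 y.2
      · intro h
        exact (hR a x.1 y.1).2 h.1
    have hcl2 : ∀ (a : Ag) (x : {u : W0 // u ∈ Y}) (u : W),
        ckRel N' Set.univ (f v) (f' x) → N'.R a (f' x) u → u ∈ Set.range f' := by
      intro a x u hx hu
      have hxN : ckRel N Set.univ (f v) (f x.1) :=
        ckRel_mono (le_refl _) (fun a v u (h : N'.R a v u) => h.1) hx
      have huN : N.R a (f x.1) u := hu.1
      obtain ⟨u', rfl⟩ := hcl a x.1 u hxN huN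
      have hgate : f x.1 ∈ Z ↔ f u' ∈ Z := hu.2 (Set.mem_univ a) hxN
      have hxZ : f x.1 ∈ Z := (hφx x.1 hxN).1 x.2
      have hu'reach : ckRel N Set.univ (f v) (f u') :=
        hxN.tail ⟨a, Set.mem_univ a, huN⟩
      have hu'Y : u' ∈ Y := (hφx u' hu'reach).2 (hgate.1 hxZ)
      exact ⟨⟨u', hu'Y⟩, rfl⟩
    simp only [psat, tr, sat]
    constructor
    · intro H hZv
      have hYv : psat φ K v := hφv.2 hZv
      exact (ihψ K' N' f' hV' hR' ⟨v, hYv⟩ hcl2).1 (H hYv)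
    · intro H hYv
      exact (ihψ K' N' f' hV' hR' ⟨v, hYv⟩ hcl2).2 (H (hφv.1 hYv))

/-- the translation `tr` embeds PAL into GLAL. -/
theorem pal_embedding [Fintype Ag] (ψ : PForm AP Ag) :
    ∀ (W : Type) (M : KModel AP Ag W), (∀ a : Ag, Equivalence (M.R a)) →
      ∀ w : W, psat ψ M w ↔ sat (tr ψ) M w := by
  intro W M _ w
  exact key ψ M M id (fun _ _ => Iff.rfl) (fun _ _ _ => Iff.rfl) w
    (fun _ _ u _ _ => ⟨u, rfl⟩)
end

section
/- For all PAL formulas φ and ψ, every Kripke model M, and every world w of M: (M,w) ⊨_GLAL [tr(φ)]⁺_Ag tr(ψ) if and only if (M,w) ⊨_PAL [φ]ψ, where tr is the translation from PAL into GLAL that commutes with atoms, negation, conjunction, and common knowledge operators, and maps tr([φ]φ') = [tr(φ)]⁺_Ag tr(φ'). That is, the public announcement of PAL coincides with the global announcement to the grand coalition Ag in GLAL. -/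
variable {AP Ag : Type}

section Aux
open Relation

lemma rtg_transfer {W : Type} {r s : W → W → Prop} {P : W → Prop}
    (h : ∀ x y, P x → r x y → s x y ∧ P y) {v u : W} (hv : P v)
    (hr : ReflTransGen r v u) : ReflTransGen s v u ∧ P u := by
  induction hr with
  | refl => exact ⟨ReflTransGen.refl, hv⟩
  | tail _ hst ih =>
      obtain ⟨h1, h2⟩ := ih
      obtain ⟨h3, h4⟩ := h _ _ h2 hst
      exact ⟨h1.tail h3, h4⟩

lemma rtg_map {W1 W2 : Type} (f : W1 → W2) {r : W1 → W1 → Prop} {s : W2 → W2 → Prop}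
    (h : ∀ x y, r x y → s (f x) (f y)) {v u : W1}
    (hr : ReflTransGen r v u) : ReflTransGen s (f v) (f u) := by
  induction hr with
  | refl => exact ReflTransGen.refl
  | tail _ hst ih => exact ih.tail (h _ _ hst)

lemma rtg_lift {W : Type} {X : Set W} {r : {x // x ∈ X} → {x // x ∈ X} → Prop}
    {s : W → W → Prop}
    (h : ∀ (x : {x // x ∈ X}) (y : W), s x.1 y → ∃ hy : y ∈ X, r x ⟨y, hy⟩)
    {v : {x // x ∈ X}} {u : W}
    (hs : ReflTransGen s v.1 u) : ∃ hu : u ∈ X, ReflTransGen r v ⟨u, hu⟩ := by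
  induction hs with
  | refl => exact ⟨v.2, ReflTransGen.refl⟩
  | tail _ hst ih =>
      obtain ⟨hu, h1⟩ := ih
      obtain ⟨hy, h2⟩ := h ⟨_, hu⟩ _ hst
      exact ⟨hy, h1.tail h2⟩

/-- Relativized PAL satisfaction in a set `X` of worlds. -/
def rsat : PForm AP Ag → {W : Type} → KModel AP Ag W → Set W → W → Prop
  | .atom p, _, M, _, v => v ∈ M.V p
  | .neg φ, _, M, X, v => ¬ rsat φ M X v
  | .and φ ψ, _, M, X, v => rsat φ M X v ∧ rsat ψ M X v
  | .ck A φ, _, M, X, v =>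
      ∀ u, Relation.ReflTransGen
        (fun x y => (∃ a ∈ A, M.R a x y) ∧ x ∈ X ∧ y ∈ X) v u → rsat φ M X u
  | .ann φ ψ, _, M, X, v =>
      rsat φ M X v → rsat ψ M (X ∩ {u | rsat φ M X u}) v

/-- Transfer of relativized satisfaction between two models agreeing on a
"good" region `G`. -/
lemma rsat_transfer (χ : PForm AP Ag) :
    ∀ {W : Type} (N1 N2 : KModel AP Ag W), N1.V = N2.V →
    ∀ (G S1 S2 : Set W),
      (∀ a x y, x ∈ G →
        ((N1.R a x y ∧ x ∈ S1 ∧ y ∈ S1) ↔ (N2.R a x y ∧ x ∈ S2 ∧ y ∈ S2))) →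
      (∀ a x y, x ∈ G → N1.R a x y → x ∈ S1 → y ∈ S1 → y ∈ G) →
      ∀ v, v ∈ G → (rsat χ N1 S1 v ↔ rsat χ N2 S2 v) := by
  induction χ with
  | atom p =>
      intro W N1 N2 hV G S1 S2 hR hCl v hv
      simp only [rsat, hV]
  | neg α ih =>
      intro W N1 N2 hV G S1 S2 hR hCl v hv
      simp only [rsat]
      exact not_congr (ih N1 N2 hV G S1 S2 hR hCl v hv)
  | and α β ihα ihβ =>
      intro W N1 N2 hV G S1 S2 hR hCl v hv
      simp only [rsat]
      exact and_congr (ihα N1 N2 hV G S1 S2 hR hCl v hv) (ihβ N1 N2 hV G S1 S2 hR hCl v hv)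
  | ck A α ih =>
      intro W N1 N2 hV G S1 S2 hR hCl v hv
      simp only [rsat]
      have fwd : ∀ x y, x ∈ G →
          ((∃ a ∈ A, N1.R a x y) ∧ x ∈ S1 ∧ y ∈ S1) →
          (((∃ a ∈ A, N2.R a x y) ∧ x ∈ S2 ∧ y ∈ S2) ∧ y ∈ G) := by
        intro x y hx ⟨⟨a, ha, h1⟩, hx1, hy1⟩
        obtain ⟨h2, hx2, hy2⟩ := (hR a x y hx).mp ⟨h1, hx1, hy1⟩
        exact ⟨⟨⟨a, ha, h2⟩, hx2, hy2⟩, hCl a x y hx h1 hx1 hy1⟩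
      have bwd : ∀ x y, x ∈ G →
          ((∃ a ∈ A, N2.R a x y) ∧ x ∈ S2 ∧ y ∈ S2) →
          (((∃ a ∈ A, N1.R a x y) ∧ x ∈ S1 ∧ y ∈ S1) ∧ y ∈ G) := by
        intro x y hx ⟨⟨a, ha, h2⟩, hx2, hy2⟩
        obtain ⟨h1, hx1, hy1⟩ := (hR a x y hx).mpr ⟨h2, hx2, hy2⟩
        exact ⟨⟨⟨a, ha, h1⟩, hx1, hy1⟩, hCl a x y hx h1 hx1 hy1⟩
      constructor
      · intro H u hru
        obtain ⟨h1, hu⟩ := rtg_transfer bwd hv hru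
        exact (ih N1 N2 hV G S1 S2 hR hCl u hu).mp (H u h1)
      · intro H u hru
        obtain ⟨h1, hu⟩ := rtg_transfer fwd hv hru
        exact (ih N1 N2 hV G S1 S2 hR hCl u hu).mpr (H u h1)
  | ann α β ihα ihβ =>
      intro W N1 N2 hV G S1 S2 hR hCl v hv
      simp only [rsat]
      have hα := ihα N1 N2 hV G S1 S2 hR hCl
      have hR' : ∀ a x y, x ∈ G →
          ((N1.R a x y ∧ x ∈ S1 ∩ {u | rsat α N1 S1 u} ∧ y ∈ S1 ∩ {u | rsat α N1 S1 u}) ↔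
           (N2.R a x y ∧ x ∈ S2 ∩ {u | rsat α N2 S2 u} ∧ y ∈ S2 ∩ {u | rsat α N2 S2 u})) := by
        intro a x y hx
        constructor
        · rintro ⟨h1, ⟨hxS, hxα⟩, ⟨hyS, hyα⟩⟩
          obtain ⟨h2, hx2, hy2⟩ := (hR a x y hx).mp ⟨h1, hxS, hyS⟩
          have hy : y ∈ G := hCl a x y hx h1 hxS hyS
          exact ⟨h2, ⟨hx2, (hα x hx).mp hxα⟩, ⟨hy2, (hα y hy).mp hyα⟩⟩
        · rintro ⟨h2, ⟨hxS, hxα⟩, ⟨hyS, hyα⟩⟩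
          obtain ⟨h1, hx1, hy1⟩ := (hR a x y hx).mpr ⟨h2, hxS, hyS⟩
          have hy : y ∈ G := hCl a x y hx h1 hx1 hy1
          exact ⟨h1, ⟨hx1, (hα x hx).mpr hxα⟩, ⟨hy1, (hα y hy).mpr hyα⟩⟩
      have hCl' : ∀ a x y, x ∈ G → N1.R a x y →
          x ∈ S1 ∩ {u | rsat α N1 S1 u} → y ∈ S1 ∩ {u | rsat α N1 S1 u} → y ∈ G :=
        fun a x y hx h1 hxS hyS => hCl a x y hx h1 hxS.1 hyS.1
      exact imp_congr (hα v hv) (ihβ N1 N2 hV G _ _ hR' hCl' v hv)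

/-- Relativized satisfaction in a restricted model. -/
lemma rsat_restrict (χ : PForm AP Ag) :
    ∀ {W : Type} (M : KModel AP Ag W) (X T : Set W) (v : {x // x ∈ X}),
      rsat χ (M.restrict X) {u' : {x // x ∈ X} | u'.1 ∈ T} v ↔ rsat χ M (X ∩ T) v.1 := by
  induction χ with
  | atom p =>
      intro W M X T v
      simp only [rsat, KModel.restrict, Set.mem_setOf_eq]
  | neg α ih =>
      intro W M X T v
      simp only [rsat]
      exact not_congr (ih M X T v)
  | and α β ihα ihβ =>
      intro W M X T v
      simp only [rsat]
      exact and_congr (ihα M X T v) (ihβ M X T v)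
  | ck A α ih =>
      intro W M X T v
      simp only [rsat]
      constructor
      · intro H u hru
        obtain ⟨hu, h1⟩ := rtg_lift
          (r := fun x' y' : {x // x ∈ X} =>
            (∃ a ∈ A, (M.restrict X).R a x' y') ∧ x'.1 ∈ T ∧ y'.1 ∈ T)
          (fun x' y hs => ⟨hs.2.2.1, ⟨hs.1, hs.2.1.2, hs.2.2.2⟩⟩) hru
        exact (ih M X T ⟨u, hu⟩).mp (H ⟨u, hu⟩ h1)
      · intro H u' hru'
        have h1 := rtg_map Subtype.val
          (s := fun x y => (∃ a ∈ A, M.R a x y) ∧ x ∈ X ∩ T ∧ y ∈ X ∩ T)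
          (fun x' y' h => ⟨h.1, ⟨x'.2, h.2.1⟩, ⟨y'.2, h.2.2⟩⟩) hru'
        exact (ih M X T u').mpr (H u'.1 h1)
  | ann α β ihα ihβ =>
      intro W M X T v
      simp only [rsat]
      have hset : ({u' : {x // x ∈ X} | u'.1 ∈ T} ∩
          {u' | rsat α (M.restrict X) {u'' : {x // x ∈ X} | u''.1 ∈ T} u'}) =
          {u' : {x // x ∈ X} | u'.1 ∈ T ∩ {u | rsat α M (X ∩ T) u}} := by
        ext u'
        simp only [Set.mem_inter_iff, Set.mem_setOf_eq, ihα M X T u']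
      rw [hset]
      have h2 := ihβ M X (T ∩ {u | rsat α M (X ∩ T) u}) v
      rw [show X ∩ (T ∩ {u | rsat α M (X ∩ T) u}) =
          (X ∩ T) ∩ {u | rsat α M (X ∩ T) u} from (Set.inter_assoc _ _ _).symm] at h2
      exact imp_congr (ihα M X T v) h2

/-- PAL satisfaction in a restricted model equals relativized satisfaction. -/
lemma psat_iff_rsat (χ : PForm AP Ag) :
    ∀ {W : Type} (M : KModel AP Ag W) (X : Set W) (v : {x // x ∈ X}),
      psat χ (M.restrict X) v ↔ rsat χ M X v.1 := by
  induction χ with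
  | atom p =>
      intro W M X v
      simp only [psat, rsat, KModel.restrict, Set.mem_setOf_eq]
  | neg α ih =>
      intro W M X v
      simp only [psat, rsat]
      exact not_congr (ih M X v)
  | and α β ihα ihβ =>
      intro W M X v
      simp only [psat, rsat]
      exact and_congr (ihα M X v) (ihβ M X v)
  | ck A α ih =>
      intro W M X v
      simp only [psat, rsat, ckRel]
      constructor
      · intro H u hru
        obtain ⟨hu, h1⟩ := rtg_lift
          (r := fun x' y' : {x // x ∈ X} => ∃ a ∈ A, (M.restrict X).R a x' y')
          (fun x' y hs => ⟨hs.2.2, hs.1⟩) hru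
        exact (ih M X ⟨u, hu⟩).mp (H ⟨u, hu⟩ h1)
      · intro H u' hru'
        have h1 := rtg_map Subtype.val
          (s := fun x y => (∃ a ∈ A, M.R a x y) ∧ x ∈ X ∧ y ∈ X)
          (fun x' y' h => ⟨h, x'.2, y'.2⟩) hru'
        exact (ih M X u').mpr (H u'.1 h1)
  | ann α β ihα ihβ =>
      intro W M X v
      simp only [psat, rsat]
      have hset : {u' : {x // x ∈ X} | psat α (M.restrict X) u'} =
          {u' : {x // x ∈ X} | u'.1 ∈ {u | rsat α M X u}} := by
        ext u'
        simp only [Set.mem_setOf_eq, ihα M X u']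
      constructor
      · intro H h
        have h' : psat α (M.restrict X) v := (ihα M X v).mpr h
        have h3 : rsat β (M.restrict X) {u' | psat α (M.restrict X) u'} v :=
          (ihβ (M.restrict X) {u' | psat α (M.restrict X) u'} ⟨v, h'⟩).mp (H h')
        rw [hset] at h3
        exact (rsat_restrict β M X {u | rsat α M X u} v).mp h3
      · intro H h
        have h' : rsat α M X v.1 := (ihα M X v).mp h
        have h3 := (rsat_restrict β M X {u | rsat α M X u} v).mpr (H h')
        rw [← hset] at h3
        exact (ihβ (M.restrict X) {u' | psat α (M.restrict X) u'} ⟨v, h⟩).mpr h3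

lemma ckRel_step {W : Type} (M : KModel AP Ag W) {w v u : W}
    (h : ckRel M Set.univ w v) (a : Ag) (hR : M.R a v u) : ckRel M Set.univ w u :=
  h.tail ⟨a, trivial, hR⟩

lemma refP_equiv {W : Type} (M : KModel AP Ag W) (hE : ∀ a, Equivalence (M.R a))
    (w : W) (X : Set W) :
    ∀ a, Equivalence ((M.refP w X Set.univ).R a) := by
  intro a
  constructor
  · intro x
    exact ⟨(hE a).refl x, fun _ _ => Iff.rfl⟩
  · rintro x y ⟨h1, h2⟩
    refine ⟨(hE a).symm h1, fun _ hy => ?_⟩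
    have hx : ckRel M Set.univ w x := ckRel_step M hy a ((hE a).symm h1)
    exact (h2 trivial hx).symm
  · rintro x y z ⟨h1, h2⟩ ⟨h1', h2'⟩
    refine ⟨(hE a).trans h1 h1', fun _ hx => ?_⟩
    exact (h2 trivial hx).trans (h2' trivial (ckRel_step M hx a h1))

/-- Main lemma: GLAL satisfaction of a translated formula in the global
refinement equals relativized PAL satisfaction. -/
lemma satG (χ : PForm AP Ag) :
    ∀ {W : Type} (M : KModel AP Ag W), (∀ a, Equivalence (M.R a)) →
      ∀ (X : Set W) (w v : W), ckRel M Set.univ w v → v ∈ X →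
        (sat (tr χ) (M.refP w X Set.univ) v ↔ rsat χ M X v) := by
  induction χ with
  | atom p =>
      intro W M hE X w v hZ hX
      simp only [tr, sat, rsat, KModel.refP]
  | neg α ih =>
      intro W M hE X w v hZ hX
      simp only [tr, sat, rsat]
      exact not_congr (ih M hE X w v hZ hX)
  | and α β ihα ihβ =>
      intro W M hE X w v hZ hX
      simp only [tr, sat, rsat]
      exact and_congr (ihα M hE X w v hZ hX) (ihβ M hE X w v hZ hX)
  | ck A α ih =>
      intro W M hE X w v hZ hX
      simp only [tr, sat, rsat, ckRel]
      have fwd : ∀ x y, (ckRel M Set.univ w x ∧ x ∈ X) →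
          (∃ a ∈ A, (M.refP w X Set.univ).R a x y) →
          (((∃ a ∈ A, M.R a x y) ∧ x ∈ X ∧ y ∈ X) ∧ (ckRel M Set.univ w y ∧ y ∈ X)) := by
        rintro x y ⟨hxZ, hxX⟩ ⟨a, ha, hr, hiff⟩
        have hyX : y ∈ X := (hiff trivial hxZ).mp hxX
        have hyZ : ckRel M Set.univ w y := ckRel_step M hxZ a hr
        exact ⟨⟨⟨a, ha, hr⟩, hxX, hyX⟩, hyZ, hyX⟩
      have bwd : ∀ x y, (ckRel M Set.univ w x ∧ x ∈ X) →
          ((∃ a ∈ A, M.R a x y) ∧ x ∈ X ∧ y ∈ X) →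
          ((∃ a ∈ A, (M.refP w X Set.univ).R a x y) ∧ (ckRel M Set.univ w y ∧ y ∈ X)) := by
        rintro x y ⟨hxZ, hxX⟩ ⟨⟨a, ha, hr⟩, hx1, hy1⟩
        exact ⟨⟨a, ha, hr, fun _ _ => iff_of_true hx1 hy1⟩, ckRel_step M hxZ a hr, hy1⟩
      constructor
      · intro H u hru
        obtain ⟨h1, hu⟩ := rtg_transfer bwd ⟨hZ, hX⟩ hru
        exact (ih M hE X w u hu.1 hu.2).mp (H u h1)
      · intro H u hru
        obtain ⟨h1, hu⟩ := rtg_transfer fwd ⟨hZ, hX⟩ hru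
        exact (ih M hE X w u hu.1 hu.2).mpr (H u h1)
  | ann α β ihα ihβ =>
      intro W M hE X w v hZ hX
      simp only [tr, sat, rsat]
      have hαv := ihα M hE X w v hZ hX
      set M' := M.refP w X Set.univ with hM'
      have hM'E := refP_equiv M hE w X
      have transfer : v ∈ X →
          (rsat β M' {u | sat (tr α) M' u} v ↔
           rsat β M (X ∩ {u | rsat α M X u}) v) := by
        intro _
        refine rsat_transfer β M' M rfl {u | ckRel M Set.univ w u ∧ u ∈ X} _ _ ?_ ?_ v ⟨hZ, hX⟩
        · rintro a x y ⟨hxZ, hxX⟩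
          constructor
          · rintro ⟨⟨hr, hiff⟩, hxY, hyY⟩
            have hyX : y ∈ X := (hiff trivial hxZ).mp hxX
            have hyZ := ckRel_step M hxZ a hr
            exact ⟨hr, ⟨hxX, (ihα M hE X w x hxZ hxX).mp hxY⟩,
              ⟨hyX, (ihα M hE X w y hyZ hyX).mp hyY⟩⟩
          · rintro ⟨hr, ⟨hxX', hxT⟩, ⟨hyX', hyT⟩⟩
            have hyZ := ckRel_step M hxZ a hr
            exact ⟨⟨hr, fun _ _ => iff_of_true hxX' hyX'⟩,
              (ihα M hE X w x hxZ hxX').mpr hxT, (ihα M hE X w y hyZ hyX').mpr hyT⟩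
        · rintro a x y ⟨hxZ, hxX⟩ ⟨hr, hiff⟩ _ _
          exact ⟨ckRel_step M hxZ a hr, (hiff trivial hxZ).mp hxX⟩
      constructor
      · intro H h
        have hα : sat (tr α) M' v := hαv.mpr h
        have h2 := H hα
        have h3 : rsat β M' {u | sat (tr α) M' u} v :=
          (ihβ M' hM'E {u | sat (tr α) M' u} v v ReflTransGen.refl hα).mp h2
        exact (transfer hX).mp h3
      · intro H h
        have hα : rsat α M X v := hαv.mp h
        have h3 := (transfer hX).mpr (H hα)
        exact (ihβ M' hM'E {u | sat (tr α) M' u} v v ReflTransGen.refl h).mpr h3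

/-- The translation is correct: `sat (tr χ)` coincides with `psat χ`. -/
lemma tr_correct (χ : PForm AP Ag) :
    ∀ {W : Type} (M : KModel AP Ag W), (∀ a, Equivalence (M.R a)) →
      ∀ v, sat (tr χ) M v ↔ psat χ M v := by
  induction χ with
  | atom p => intro W M hE v; simp only [tr, sat, psat]
  | neg α ih =>
      intro W M hE v
      simp only [tr, sat, psat]
      exact not_congr (ih M hE v)
  | and α β ihα ihβ =>
      intro W M hE v
      simp only [tr, sat, psat]
      exact and_congr (ihα M hE v) (ihβ M hE v)
  | ck A α ih =>
      intro W M hE v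
      simp only [tr, sat, psat]
      exact forall_congr' fun u => imp_congr Iff.rfl (ih M hE u)
  | ann α β ihα ihβ =>
      intro W M hE v
      simp only [tr, sat, psat]
      have hset : {u | sat (tr α) M u} = {u | psat α M u} := by
        ext u; exact ihα M hE u
      constructor
      · intro H h
        have hα : sat (tr α) M v := (ihα M hE v).mpr h
        have h3 : rsat β M {u | sat (tr α) M u} v :=
          (satG β M hE {u | sat (tr α) M u} v v ReflTransGen.refl hα).mp (H hα)
        rw [hset] at h3
        exact (psat_iff_rsat β M {u | psat α M u} ⟨v, h⟩).mpr h3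
      · intro H hα
        have h : psat α M v := (ihα M hE v).mp hα
        have h3 : rsat β M {u | psat α M u} v :=
          (psat_iff_rsat β M {u | psat α M u} ⟨v, h⟩).mp (H h)
        rw [← hset] at h3
        exact (satG β M hE {u | sat (tr α) M u} v v ReflTransGen.refl hα).mpr h3

end Aux

/-- public announcement of PAL coincides with the global
announcement to the grand coalition `Ag` in GLAL. -/
theorem public_is_global_to_grand_coalition [Fintype Ag] (φ ψ : PForm AP Ag) :
    ∀ (W : Type) (M : KModel AP Ag W), (∀ a : Ag, Equivalence (M.R a)) →
      ∀ w : W,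
        sat (Form.annP (tr φ) Set.univ (tr ψ)) M w ↔ psat (PForm.ann φ ψ) M w := by
  intro W M hE w
  exact tr_correct (PForm.ann φ ψ) M hE w
end

section
/- For every propositional formula φ (a GLAL formula built from atoms, negation and conjunction only, containing no C_A operators and no announcement operators) and every coalition A ⊆ Ag, the formula [φ]⁻_A E_A φ is valid: after locally and truthfully announcing φ to the agents in A, every agent in A knows φ. -/
variable {AP Ag : Type}

/-- Propositional formulas: built from atoms, negation and conjunction only. -/
def Form.isProp : Form AP Ag → Prop
  | .atom _ => True
  | .neg φ => φ.isProp
  | .and φ ψ => φ.isProp ∧ ψ.isProp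
  | _ => False

/-- for propositional `φ`, the formula `[φ]⁻_A E_A φ` is valid.
(The satisfaction of `E_A φ`, the conjunction over `a ∈ A` of `K_a φ = C_{a} φ`,
is unfolded: each conjunct `K_a φ` holds in the refined model.) -/
theorem local_announcement_everybody_knows [Fintype Ag]
    (φ : Form AP Ag) (hφ : φ.isProp) (A : Set Ag) :
    ∀ (W : Type) (M : KModel AP Ag W), (∀ a : Ag, Equivalence (M.R a)) →
      ∀ w : W, sat φ M w →
        ∀ a ∈ A, sat (Form.ck {a} φ) (M.refM w {v | sat φ M v} A) w := by
  have propSat : ∀ (ψ : Form AP Ag), ψ.isProp → ∀ (W : Type)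
      (M M' : KModel AP Ag W), M.V = M'.V → ∀ v, (sat ψ M v ↔ sat ψ M' v) := by
    intro ψ hψ W M M' hV v
    induction ψ generalizing v with
    | atom p => simp [sat, hV]
    | neg ψ ih => simp [sat, ih hψ]
    | and ψ₁ ψ₂ ih₁ ih₂ => simp [sat, ih₁ hψ.1, ih₂ hψ.2]
    | ck => exact absurd hψ id
    | annP => exact absurd hψ id
    | annM => exact absurd hψ id
  intro W M hEq w hw a ha
  intro v hv
  -- invariant: M.R a w v ∧ sat φ M v
  have key : M.R a w v ∧ sat φ M v := by
    induction hv with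
    | refl => exact ⟨(hEq a).refl w, hw⟩
    | tail hsteps hstep ih =>
      rename_i b c
      obtain ⟨a', ha', hR⟩ := hstep
      rw [Set.mem_singleton_iff] at ha'
      rw [ha'] at hR
      refine ⟨(hEq a).trans ih.1 hR.1, ?_⟩
      exact (hR.2 ha ih.1).mp ih.2
  exact (propSat φ hφ W M (M.refM w {v | sat φ M v} A) rfl v).mp key.2
end

section
/- For every propositional formula φ (a GLAL formula built from atoms, negation and conjunction only, containing no C_A operators and no announcement operators) and every coalition A ⊆ Ag, the formula [φ]⁺_A C_A φ is valid: after globally and truthfully announcing φ to the agents in A, φ is common knowledge among the agents in A. -/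
variable {AP Ag : Type}

lemma sat_prop_congr {W : Type} (φ : Form AP Ag) (hφ : φ.isProp)
    (M M' : KModel AP Ag W) (hV : M.V = M'.V) (w : W) :
    sat φ M w ↔ sat φ M' w := by
  induction φ generalizing w with
  | atom p => simp [sat, hV]
  | neg ψ ih => exact not_congr (ih hφ w)
  | and ψ χ ih ih' => exact and_congr (ih hφ.1 w) (ih' hφ.2 w)
  | _ => exact absurd hφ (by simp [Form.isProp])

/-- for propositional `φ`, the formula `[φ]⁺_A C_A φ` is valid. -/
theorem global_announcement_common_knowledge [Fintype Ag]
    (φ : Form AP Ag) (hφ : φ.isProp) (A : Set Ag) :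
    Valid (Form.annP φ A (Form.ck A φ)) := by
  intro W M _ w hw
  set X : Set W := {v | sat φ M v} with hX
  set M' := M.refP w X A with hM'
  intro v hv
  rw [sat_prop_congr φ hφ M' M rfl]
  suffices h : v ∈ X ∧ ckRel M A w v from h.1
  induction hv with
  | refl => exact ⟨hw, Relation.ReflTransGen.refl⟩
  | tail _ hstep ih =>
    obtain ⟨a, ha, hRm, hcond⟩ := hstep
    exact ⟨(hcond ha ih.2).mp ih.1, ih.2.tail ⟨a, ha, hRm⟩⟩
end

section
/- Assume Ag contains at least two agents. Then there exist Kripke models N and N', worlds w of N and w' of N', a modal bisimulation B between N and N' with B(w,w'), and a GLAL formula φ such that (N,w) ⊨ φ and (N',w') ⊭ φ. That is, modally bisimilar pointed models may be distinguished by GLAL formulas. -/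
variable {AP Ag : Type}

/-- A modal (standard) bisimulation between two Kripke models. -/
def IsModalBisim {W W' : Type} (M : KModel AP Ag W) (M' : KModel AP Ag W')
    (B : W → W' → Prop) : Prop :=
  ∀ w w', B w w' →
    (∀ p, w ∈ M.V p ↔ w' ∈ M'.V p) ∧
    (∀ a v, M.R a w v → ∃ v', M'.R a w' v' ∧ B v v') ∧
    (∀ a v', M'.R a w' v' → ∃ v, M.R a w v ∧ B v v')

/-- modally bisimilar pointed models can be distinguished by GLAL. -/
theorem glal_not_invariant_under_modal_bisimulation
    [Fintype Ag] [Nonempty AP] (hAg : ∃ a b : Ag, a ≠ b) :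
    ∃ (W W' : Type) (M : KModel AP Ag W) (M' : KModel AP Ag W')
      (B : W → W' → Prop) (w : W) (w' : W') (φ : Form AP Ag),
      (∀ a : Ag, Equivalence (M.R a)) ∧ (∀ a : Ag, Equivalence (M'.R a)) ∧
      IsModalBisim M M' B ∧ B w w' ∧ sat φ M w ∧ ¬ sat φ M' w' := by
  classical
  obtain ⟨a₀, b₀, hab⟩ := hAg
  obtain ⟨p₀⟩ := ‹Nonempty AP›
  refine ⟨Fin 4, Fin 2,
    ⟨fun x v u => x ≠ a₀ → v.val / 2 = u.val / 2, fun _ => {v | v.val % 2 = 0}⟩,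
    ⟨fun _ _ _ => True, fun _ => {w | w = 0}⟩,
    fun v w => (v.val % 2 = 0 ↔ w = 0), 0, 0,
    Form.annM (.atom p₀) Set.univ (.neg (.ck Set.univ (.atom p₀))),
    ?_, ?_, ?_, ?_, ?_, ?_⟩
  · intro a
    exact ⟨fun v _ => rfl, fun h hx => (h hx).symm,
      fun h1 h2 hx => (h1 hx).trans (h2 hx)⟩
  · intro a
    exact ⟨fun _ => trivial, fun _ => trivial, fun _ _ => trivial⟩
  · intro v w hB
    refine ⟨fun p => hB, ?_, ?_⟩
    · intro x u _
      refine ⟨if u.val % 2 = 0 then 0 else 1, trivial, ?_⟩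
      split_ifs with h <;> simp [h, Fin.ext_iff]
    · intro x u' _
      have hv := v.isLt
      have hu := u'.isLt
      refine ⟨⟨2 * (v.val / 2) + u'.val, by omega⟩, fun _ => ?_, ?_⟩
      · show v.val / 2 = (2 * (v.val / 2) + u'.val) / 2
        omega
      · show (2 * (v.val / 2) + u'.val) % 2 = 0 ↔ u' = 0
        rw [Fin.ext_iff]
        show _ ↔ u'.val = 0
        omega
  · exact ⟨fun _ => rfl, fun _ => rfl⟩
  · intro _
    intro hck
    refine absurd (hck 1 ?_) ?_
    · refine Relation.ReflTransGen.head (b := 2) ⟨a₀, Set.mem_univ _, ?_, ?_⟩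
        (Relation.ReflTransGen.head (b := 3) ⟨b₀, Set.mem_univ _, ?_, ?_⟩
          (Relation.ReflTransGen.single ⟨a₀, Set.mem_univ _, ?_, ?_⟩))
      · exact fun h => absurd rfl h
      · exact fun _ _ => iff_of_true rfl rfl
      · exact fun _ => rfl
      · intro _ h
        exact absurd (h (Ne.symm hab)) (by decide)
      · exact fun h => absurd rfl h
      · intro _ _
        refine iff_of_false ?_ ?_
        · show ¬ ((3 : Fin 4).val % 2 = 0); decide
        · show ¬ ((1 : Fin 4).val % 2 = 0); decide
    · show ¬ ((1 : Fin 4).val % 2 = 0); decide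
  · intro h
    have h2 := h rfl
    apply h2
    intro v hv
    show v = 0
    induction hv with
    | refl => rfl
    | tail _ hstep ih =>
      obtain ⟨x, -, hR⟩ := hstep
      exact (hR.2 (Set.mem_univ x) trivial).mp ih
end

section
/- Assume Ag contains at least two agents. Then GLAL is strictly more expressive than epistemic logic with common knowledge: there exists a GLAL formula φ such that no formula ψ ∈ L_el satisfies, for every Kripke model M and world w of M, (M,w) ⊨ φ if and only if (M,w) ⊨ ψ. -/
variable {AP Ag : Type}

/-- Formulas of epistemic logic with common knowledge: no announcement operators. -/
def Form.noAnn : Form AP Ag → Prop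
  | .atom _ => True
  | .neg φ => φ.noAnn
  | .and φ ψ => φ.noAnn ∧ ψ.noAnn
  | .ck _ φ => φ.noAnn
  | .annP _ _ _ => False
  | .annM _ _ _ => False

/-! ### Auxiliary constructions for the expressivity proof -/

/-- First model: worlds `Bool`, `p` true exactly at `true`; agent `a` has the
total relation, everyone else identity. -/
def M1 (p : AP) (a : Ag) : KModel AP Ag Bool where
  R c u t := u = t ∨ c = a
  V q := {u | u = true ∧ q = p}

/-- Second model: worlds `Bool × Bool`, `p` true iff first component is `true`;
agent `a`: same second component; agent `b`: same first component; others identity. -/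
def M2 (p : AP) (a b : Ag) : KModel AP Ag (Bool × Bool) where
  R c u t := u = t ∨ (c = a ∧ u.2 = t.2) ∨ (c = b ∧ u.1 = t.1)
  V q := {u | u.1 = true ∧ q = p}

lemma M1equiv (p : AP) (a : Ag) : ∀ c, Equivalence ((M1 p a).R c) := by
  intro c
  constructor
  · intro x; exact Or.inl rfl
  · rintro x y (rfl | h); · exact Or.inl rfl
    · exact Or.inr h
  · rintro x y z (rfl | h) hyz
    · exact hyz
    · exact Or.inr h

lemma M2equiv (p : AP) (a b : Ag) (hab : a ≠ b) :
    ∀ c, Equivalence ((M2 p a b).R c) := by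
  intro c
  constructor
  · intro x; exact Or.inl rfl
  · rintro x y (rfl | ⟨rfl, h⟩ | ⟨rfl, h⟩)
    · exact Or.inl rfl
    · exact Or.inr (Or.inl ⟨rfl, h.symm⟩)
    · exact Or.inr (Or.inr ⟨rfl, h.symm⟩)
  · rintro x y z (rfl | ⟨rfl, h⟩ | ⟨rfl, h⟩) hyz
    · exact hyz
    · rcases hyz with rfl | ⟨_, h2⟩ | ⟨hba, _⟩
      · exact Or.inr (Or.inl ⟨rfl, h⟩)
      · exact Or.inr (Or.inl ⟨rfl, h.trans h2⟩)
      · exact absurd hba hab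
    · rcases hyz with rfl | ⟨hba, _⟩ | ⟨_, h2⟩
      · exact Or.inr (Or.inr ⟨rfl, h⟩)
      · exact absurd hba.symm hab
      · exact Or.inr (Or.inr ⟨rfl, h.trans h2⟩)

/-- Forth condition of the bisimulation `Z u u' ↔ u = u'.1`. -/
lemma bisim_forth {p : AP} {a b c : Ag} {u t : Bool} {u' : Bool × Bool}
    (h : (M1 p a).R c u t) (hZ : u = u'.1) :
    ∃ t', (M2 p a b).R c u' t' ∧ t = t'.1 := by
  rcases h with rfl | rfl
  · exact ⟨u', Or.inl rfl, hZ⟩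
  · exact ⟨(t, u'.2), Or.inr (Or.inl ⟨rfl, rfl⟩), rfl⟩

/-- Back condition of the bisimulation. -/
lemma bisim_back {p : AP} {a b c : Ag} {u' t' : Bool × Bool}
    (h : (M2 p a b).R c u' t') : (M1 p a).R c u'.1 t'.1 := by
  rcases h with rfl | ⟨rfl, _⟩ | ⟨_, h1⟩
  · exact Or.inl rfl
  · exact Or.inr rfl
  · exact Or.inl h1

lemma ck_forth {p : AP} {a b : Ag} {A : Set Ag} {u v : Bool} {u' : Bool × Bool}
    (hZ : u = u'.1) (h : ckRel (M1 p a) A u v) :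
    ∃ v', ckRel (M2 p a b) A u' v' ∧ v = v'.1 := by
  induction h with
  | refl => exact ⟨u', Relation.ReflTransGen.refl, hZ⟩
  | tail _ step ih =>
    obtain ⟨m', hm', he⟩ := ih
    obtain ⟨c, hc, hR⟩ := step
    obtain ⟨t', hR', ht⟩ := bisim_forth (b := b) hR he
    exact ⟨t', hm'.tail ⟨c, hc, hR'⟩, ht⟩

lemma ck_back {p : AP} {a b : Ag} {A : Set Ag} {u' v' : Bool × Bool}
    (h : ckRel (M2 p a b) A u' v') : ckRel (M1 p a) A u'.1 v'.1 := by
  induction h with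
  | refl => exact Relation.ReflTransGen.refl
  | tail _ step ih =>
    obtain ⟨c, hc, hR⟩ := step
    exact ih.tail ⟨c, hc, bisim_back hR⟩

/-- Announcement-free formulas transfer along the bisimulation. -/
lemma transfer (p : AP) (a b : Ag) :
    ∀ ψ : Form AP Ag, ψ.noAnn → ∀ (u : Bool) (u' : Bool × Bool), u = u'.1 →
      (sat ψ (M1 p a) u ↔ sat ψ (M2 p a b) u') := by
  intro ψ
  induction ψ with
  | atom q =>
    intro _ u u' hZ
    show (u = true ∧ q = p) ↔ (u'.1 = true ∧ q = p)
    rw [hZ]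
  | neg χ ih =>
    intro h u u' hZ
    exact not_congr (ih h u u' hZ)
  | and χ₁ χ₂ ih₁ ih₂ =>
    intro h u u' hZ
    exact and_congr (ih₁ h.1 u u' hZ) (ih₂ h.2 u u' hZ)
  | ck A χ ih =>
    intro h u u' hZ
    show (∀ v, ckRel (M1 p a) A u v → sat χ (M1 p a) v) ↔
      (∀ v', ckRel (M2 p a b) A u' v' → sat χ (M2 p a b) v')
    constructor
    · intro hall v' hr
      have h1 : ckRel (M1 p a) A u v'.1 := by rw [hZ]; exact ck_back hr
      exact (ih h v'.1 v' rfl).mp (hall _ h1)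
    · intro hall v hr
      obtain ⟨v', hr', he⟩ := ck_forth (b := b) hZ hr
      exact (ih h v v' he).mpr (hall v' hr')
  | annP _ _ _ _ _ => intro h; exact absurd h id
  | annM _ _ _ _ _ => intro h; exact absurd h id

/-- The distinguishing GLAL formula `[p]⁻_{a} C_Ag p`. -/
def glalPhi (p : AP) (a : Ag) : Form AP Ag :=
  .annM (.atom p) {a} (.ck Set.univ (.atom p))

lemma sat_M1 (p : AP) (a : Ag) : sat (glalPhi p a) (M1 p a) true := by
  intro _
  intro v hv
  set X : Set Bool := {v | sat (Form.atom p (Ag := Ag)) (M1 p a) v} with hX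
  have hreach : ∀ v, ckRel ((M1 p a).refM true X {a}) Set.univ true v → v = true := by
    intro v hv
    induction hv with
    | refl => rfl
    | tail _ step ih =>
      subst ih
      obtain ⟨c, _, hR, hcond⟩ := step
      rcases hR with h | rfl
      · exact h.symm
      · have htX : (true : Bool) ∈ X := ⟨rfl, rfl⟩
        have := (hcond rfl (Or.inl rfl)).mp htX
        exact this.1
  have := hreach v hv
  subst this
  exact ⟨rfl, rfl⟩

lemma not_sat_M2 (p : AP) (a b : Ag) (hab : a ≠ b) :
    ¬ sat (glalPhi p a) (M2 p a b) (true, true) := by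
  intro h
  have hp : sat (Form.atom p (Ag := Ag)) (M2 p a b) (true, true) := ⟨rfl, rfl⟩
  have hC := h hp
  set X : Set (Bool × Bool) := {v | sat (Form.atom p (Ag := Ag)) (M2 p a b) v} with hX
  -- step 1 : (true,true) →_b (true,false)
  have step1 : ((M2 p a b).refM (true, true) X {a}).R b (true, true) (true, false) := by
    refine ⟨Or.inr (Or.inr ⟨rfl, rfl⟩), ?_⟩
    intro hb
    exact absurd hb.symm hab
  -- step 2 : (true,false) →_a (false,false)
  have step2 : ((M2 p a b).refM (true, true) X {a}).R a (true, false) (false, false) := by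
    refine ⟨Or.inr (Or.inl ⟨rfl, rfl⟩), ?_⟩
    intro _ hR
    rcases hR with h' | ⟨_, h'⟩ | ⟨h', _⟩
    · simp at h'
    · simp at h'
    · exact absurd h' hab
  have hpath : ckRel ((M2 p a b).refM (true, true) X {a}) Set.univ (true, true) (false, false) :=
    Relation.ReflTransGen.tail
      (Relation.ReflTransGen.single ⟨b, Set.mem_univ b, step1⟩)
      ⟨a, Set.mem_univ a, step2⟩
  have := hC (false, false) hpath
  exact absurd this.1 (by simp)

/-- GLAL is strictly more expressive than epistemic logic with
common knowledge: some GLAL formula is equivalent to no announcement-free formula. -/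
theorem glal_more_expressive_than_el
    [Fintype Ag] [Nonempty AP] (hAg : ∃ a b : Ag, a ≠ b) :
    ∃ φ : Form AP Ag, ∀ ψ : Form AP Ag, ψ.noAnn →
      ¬ (∀ (W : Type) (M : KModel AP Ag W), (∀ a : Ag, Equivalence (M.R a)) →
           ∀ w : W, (sat φ M w ↔ sat ψ M w)) := by
  obtain ⟨a, b, hab⟩ := hAg
  have p : AP := Classical.arbitrary AP
  refine ⟨glalPhi p a, ?_⟩
  intro ψ hψ hcontra
  have h1 : sat (glalPhi p a) (M1 p a) true := sat_M1 p a
  have h2 := (hcontra Bool (M1 p a) (M1equiv p a) true).mp h1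
  have h3 := (transfer p a b ψ hψ true (true, true) rfl).mp h2
  have h4 := (hcontra _ (M2 p a b) (M2equiv p a b hab) (true, true)).mpr h3
  exact not_sat_M2 p a b hab h4
end

section
/- Assume Ag contains at least two agents. Then GLAL is strictly more expressive than public announcement logic: there exists a GLAL formula φ such that no PAL formula ψ satisfies, for every Kripke model M and world w of M, (M,w) ⊨_GLAL φ if and only if (M,w) ⊨_PAL ψ. -/
variable {AP Ag : Type}

section Expressivity

variable {AP Ag : Type}

/-- Bisimulation between two Kripke models. -/
def IsBisim {W1 W2 : Type} (M1 : KModel AP Ag W1) (M2 : KModel AP Ag W2)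
    (Z : W1 → W2 → Prop) : Prop :=
  (∀ p v v', Z v v' → (v ∈ M1.V p ↔ v' ∈ M2.V p)) ∧
  (∀ a v v' u, Z v v' → M1.R a v u → ∃ u', M2.R a v' u' ∧ Z u u') ∧
  (∀ a v v' u', Z v v' → M2.R a v' u' → ∃ u, M1.R a v u ∧ Z u u')

lemma IsBisim.symm {W1 W2 : Type} {M1 : KModel AP Ag W1} {M2 : KModel AP Ag W2}
    {Z : W1 → W2 → Prop} (h : IsBisim M1 M2 Z) :
    IsBisim M2 M1 (fun y x => Z x y) :=
  ⟨fun p v v' hz => (h.1 p v' v hz).symm,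
   fun a v v' u hz hr => h.2.2 a v' v u hz hr,
   fun a v v' u' hz hr => h.2.1 a v' v u' hz hr⟩

lemma bisim_ck_forth {W1 W2 : Type} {M1 : KModel AP Ag W1} {M2 : KModel AP Ag W2}
    {Z : W1 → W2 → Prop} (h : IsBisim M1 M2 Z) (A : Set Ag) {v v' u : _}
    (hz : Z v v') (hc : ckRel M1 A v u) : ∃ u', ckRel M2 A v' u' ∧ Z u u' := by
  induction hc with
  | refl => exact ⟨v', Relation.ReflTransGen.refl, hz⟩
  | tail hs hst ih =>
    obtain ⟨u0', hc0, hz0⟩ := ih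
    obtain ⟨c, hcA, hR⟩ := hst
    obtain ⟨u', hR', hz'⟩ := h.2.1 c _ _ _ hz0 hR
    exact ⟨u', hc0.tail ⟨c, hcA, hR'⟩, hz'⟩

lemma psat_bisim : ∀ (ψ : PForm AP Ag) {W1 W2 : Type} (M1 : KModel AP Ag W1)
    (M2 : KModel AP Ag W2) (Z : W1 → W2 → Prop), IsBisim M1 M2 Z →
    ∀ {v v'}, Z v v' → (psat ψ M1 v ↔ psat ψ M2 v')
  | .atom p, _, _, M1, M2, Z, h, v, v', hz => h.1 p v v' hz
  | .neg φ, _, _, M1, M2, Z, h, v, v', hz =>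
      not_congr (psat_bisim φ M1 M2 Z h hz)
  | .and φ ψ, _, _, M1, M2, Z, h, v, v', hz =>
      and_congr (psat_bisim φ M1 M2 Z h hz) (psat_bisim ψ M1 M2 Z h hz)
  | .ck A φ, _, _, M1, M2, Z, h, v, v', hz => by
      simp only [psat]
      constructor
      · intro H u' hc
        obtain ⟨u, hcu, hzu⟩ := bisim_ck_forth h.symm A hz hc
        exact (psat_bisim φ M1 M2 Z h hzu).1 (H u hcu)
      · intro H u hc
        obtain ⟨u', hcu, hzu⟩ := bisim_ck_forth h A hz hc
        exact (psat_bisim φ M1 M2 Z h hzu).2 (H u' hcu)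
  | .ann φ ψ, _, _, M1, M2, Z, h, v, v', hz => by
      simp only [psat]
      have hφ : ∀ {x y}, Z x y → (psat φ M1 x ↔ psat φ M2 y) :=
        fun {x y} hxy => psat_bisim φ M1 M2 Z h hxy
      have hres : IsBisim (M1.restrict {x | psat φ M1 x})
          (M2.restrict {y | psat φ M2 y}) (fun x y => Z x.1 y.1) := by
        refine ⟨fun p x y hxy => h.1 p x.1 y.1 hxy, ?_, ?_⟩
        · rintro c x y u hxy hR
          obtain ⟨u', hR', hz'⟩ := h.2.1 c x.1 y.1 u.1 hxy hR
          exact ⟨⟨u', (hφ hz').1 u.2⟩, hR', hz'⟩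
        · rintro c x y u' hxy hR
          obtain ⟨u, hR', hz'⟩ := h.2.2 c x.1 y.1 u'.1 hxy hR
          exact ⟨⟨u, (hφ hz').2 u'.2⟩, hR', hz'⟩
      constructor
      · intro H h2
        exact (psat_bisim ψ _ _ _ hres (v := ⟨v, (hφ hz).2 h2⟩)
          (v' := ⟨v', h2⟩) hz).1 (H ((hφ hz).2 h2))
      · intro H h1
        exact (psat_bisim ψ _ _ _ hres (v := ⟨v, h1⟩)
          (v' := ⟨v', (hφ hz).1 h1⟩) hz).2 (H ((hφ hz).1 h1))

/-- Unfolding common knowledge of a single agent when its relation is a preorder. -/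
lemma sat_ck_singleton {W : Type} (M : KModel AP Ag W) (c : Ag) (φ : Form AP Ag)
    (h1 : Reflexive (M.R c)) (h2 : Transitive (M.R c)) (w : W) :
    sat (.ck {c} φ) M w ↔ ∀ v, M.R c w v → sat φ M v := by
  have he : (fun v u => ∃ a ∈ ({c} : Set Ag), M.R a v u) = M.R c := by
    funext v u; simp
  simp only [sat, ckRel, he, @Relation.reflTransGen_eq_self _ (M.R c) ⟨h1⟩ ⟨fun _ _ _ hxy hyz => h2 hxy hyz⟩]

/-- The concrete relations of the first counterexample model, on `Fin 4`. -/
def Ra4 (x y : Fin 4) : Prop := x.val / 2 = y.val / 2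
def Rb4 (x y : Fin 4) : Prop := (x.val + 1) % 4 / 2 = (y.val + 1) % 4 / 2

instance : DecidableRel Ra4 := fun x y => inferInstanceAs (Decidable (_ = _))
instance : DecidableRel Rb4 := fun x y => inferInstanceAs (Decidable (_ = _))

/-- First counterexample model. -/
def Mod1 (a : Ag) : KModel AP Ag (Fin 4) where
  R c x y := (c = a ∧ Ra4 x y) ∨ (c ≠ a ∧ Rb4 x y)
  V _ := {x | x.val % 2 = 0}

/-- Second counterexample model. -/
def Mod2 : KModel AP Ag (Fin 2) where
  R _ _ _ := True
  V _ := {x | x.val % 2 = 0}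

lemma Mod1_equiv (a : Ag) : ∀ c : Ag, Equivalence ((Mod1 (AP := AP) a).R c) := by
  intro c
  constructor
  · intro x
    by_cases hc : c = a
    · exact Or.inl ⟨hc, rfl⟩
    · exact Or.inr ⟨hc, rfl⟩
  · rintro x y (⟨hc, h⟩ | ⟨hc, h⟩)
    · exact Or.inl ⟨hc, h.symm⟩
    · exact Or.inr ⟨hc, h.symm⟩
  · rintro x y z (⟨hc, h⟩ | ⟨hc, h⟩) (⟨hc', h'⟩ | ⟨hc', h'⟩)
    · exact Or.inl ⟨hc, h.trans h'⟩
    · exact absurd hc hc'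
    · exact absurd hc' hc
    · exact Or.inr ⟨hc, h.trans h'⟩

lemma Mod2_equiv : ∀ c : Ag, Equivalence ((Mod2 (AP := AP)).R c) :=
  fun _ => ⟨fun _ => trivial, fun _ => trivial, fun _ _ => trivial⟩

/-- The distinguishing GLAL formula. -/
def dform (a b : Ag) (p : AP) : Form AP Ag :=
  .annM (.atom p) {a}
    (.ck {b} (.ck {a} ((Form.atom p).impl (.ck {a} (.atom p)))))

/-- Abbreviation: the refined model used when evaluating `dform` in `Mod1`. -/
def N1 (a : Ag) (p : AP) : KModel AP Ag (Fin 4) :=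
  (Mod1 a).refM 0 {v | sat (Form.atom p) (Mod1 a) v} {a}

def Ra4' (x y : Fin 4) : Prop :=
  Ra4 x y ∧ (Ra4 0 x → (x.val % 2 = 0 ↔ y.val % 2 = 0))

instance : DecidableRel Ra4' := fun _ _ => instDecidableAnd

lemma N1_Ra (a : Ag) (p : AP) (x y : Fin 4) :
    (N1 (AP := AP) a p).R a x y ↔ Ra4' x y := by
  simp [N1, KModel.refM, Mod1, sat, Ra4']

lemma N1_Rb {a b : Ag} (hab : b ≠ a) (p : AP) (x y : Fin 4) :
    (N1 (AP := AP) a p).R b x y ↔ Rb4 x y := by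
  simp [N1, KModel.refM, Mod1, sat, hab]

lemma N1_Ra_refl (a : Ag) (p : AP) : Reflexive ((N1 (AP := AP) a p).R a) := by
  have h : ∀ x, Ra4' x x := by decide
  intro x; rw [N1_Ra]; exact h x

lemma N1_Ra_trans (a : Ag) (p : AP) : Transitive ((N1 (AP := AP) a p).R a) := by
  have h : ∀ x y z, Ra4' x y → Ra4' y z → Ra4' x z := by decide
  intro x y z h1 h2
  rw [N1_Ra] at *
  exact h x y z h1 h2

lemma N1_Rb_refl {a b : Ag} (hab : b ≠ a) (p : AP) :
    Reflexive ((N1 (AP := AP) a p).R b) := by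
  have h : ∀ x, Rb4 x x := by decide
  intro x; rw [N1_Rb hab]; exact h x

lemma N1_Rb_trans {a b : Ag} (hab : b ≠ a) (p : AP) :
    Transitive ((N1 (AP := AP) a p).R b) := by
  have h : ∀ x y z, Rb4 x y → Rb4 y z → Rb4 x z := by decide
  intro x y z h1 h2
  rw [N1_Rb hab] at *
  exact h x y z h1 h2

lemma N1_V (a : Ag) (p q : AP) (x : Fin 4) :
    x ∈ (N1 (AP := AP) a p).V q ↔ x.val % 2 = 0 := by
  simp [N1, KModel.refM, Mod1]

/-- `dform` is false at world 0 of `Mod1`. -/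
lemma sat_dform_M1_false {a b : Ag} (hab : a ≠ b) (p : AP) :
    ¬ sat (dform a b p) (Mod1 (AP := AP) a) (0 : Fin 4) := by
  intro H
  have h0 : sat (Form.atom p) (Mod1 (AP := AP) a) 0 := by simp [sat, Mod1]
  have H' := H h0
  change sat _ (N1 a p) 0 at H'
  rw [sat_ck_singleton _ b _ (N1_Rb_refl hab.symm p) (N1_Rb_trans hab.symm p)] at H'
  have h3 := H' 3 (by rw [N1_Rb hab.symm]; decide)
  rw [sat_ck_singleton _ a _ (N1_Ra_refl a p) (N1_Ra_trans a p)] at h3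
  have h2 := h3 2 (by rw [N1_Ra]; decide)
  simp only [Form.impl, sat, not_and, not_not] at h2
  have hk := h2 ((N1_V a p p 2).2 (by decide))
  have hstep : ckRel (N1 (AP := AP) a p) {a} 2 3 :=
    Relation.ReflTransGen.single ⟨a, rfl, (N1_Ra a p 2 3).2 (by decide)⟩
  have := (N1_V a p p 3).1 (hk 3 hstep)
  exact absurd this (by decide)

/-- Abbreviation: the refined model used when evaluating `dform` in `Mod2`. -/
def N2 (a : Ag) (p : AP) : KModel AP Ag (Fin 2) :=
  (Mod2 (AP := AP) (Ag := Ag)).refM 0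
    {v | sat (Form.atom p) (Mod2 (AP := AP) (Ag := Ag)) v} {a}

lemma N2_Ra (a : Ag) (p : AP) (x y : Fin 2) :
    (N2 (AP := AP) a p).R a x y ↔ (x.val % 2 = 0 ↔ y.val % 2 = 0) := by
  simp [N2, KModel.refM, Mod2, sat]

lemma N2_Rb {a b : Ag} (hab : b ≠ a) (p : AP) (x y : Fin 2) :
    (N2 (AP := AP) a p).R b x y := by
  simp [N2, KModel.refM, Mod2, sat, hab]

lemma N2_Ra_refl (a : Ag) (p : AP) : Reflexive ((N2 (AP := AP) a p).R a) := by
  intro x; rw [N2_Ra]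

lemma N2_Ra_trans (a : Ag) (p : AP) : Transitive ((N2 (AP := AP) a p).R a) := by
  intro x y z h1 h2
  rw [N2_Ra] at *
  exact h1.trans h2

lemma N2_Rb_refl {a b : Ag} (hab : b ≠ a) (p : AP) :
    Reflexive ((N2 (AP := AP) a p).R b) := fun x => N2_Rb hab p x x

lemma N2_Rb_trans {a b : Ag} (hab : b ≠ a) (p : AP) :
    Transitive ((N2 (AP := AP) a p).R b) := fun {x y z} _ _ => N2_Rb hab p x z

lemma N2_V (a : Ag) (p q : AP) (x : Fin 2) :
    x ∈ (N2 (AP := AP) a p).V q ↔ x.val % 2 = 0 := by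
  simp [N2, KModel.refM, Mod2]

/-- `dform` is true at world 0 of `Mod2`. -/
lemma sat_dform_M2_true {a b : Ag} (hab : a ≠ b) (p : AP) :
    sat (dform a b p) (Mod2 (AP := AP)) (0 : Fin 2) := by
  intro _
  change sat _ (N2 a p) 0
  rw [sat_ck_singleton _ b _ (N2_Rb_refl hab.symm p) (N2_Rb_trans hab.symm p)]
  intro v _
  rw [sat_ck_singleton _ a _ (N2_Ra_refl a p) (N2_Ra_trans a p)]
  intro u _
  simp only [Form.impl, sat, not_and, not_not]
  intro hp
  intro u' hu'
  have hu2 : (N2 (AP := AP) a p).R a u u' := by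
    have hr := N2_Ra_refl (AP := AP) a p
    have ht := N2_Ra_trans (AP := AP) a p
    rwa [ckRel, show (fun v w => ∃ c ∈ ({a} : Set Ag), (N2 (AP := AP) a p).R c v w)
        = (N2 (AP := AP) a p).R a by funext v w; simp,
      @Relation.reflTransGen_eq_self _ ((N2 (AP := AP) a p).R a) ⟨hr⟩ ⟨fun _ _ _ hxy hyz => ht hxy hyz⟩] at hu'
  rw [N2_Ra] at hu2
  exact (N2_V a p p u').2 (hu2.1 ((N2_V a p p u).1 hp))

/-- The bisimulation between `Mod1` and `Mod2`. -/
def Zb : Fin 4 → Fin 2 → Prop := fun x y => x.val % 2 = y.val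

lemma Zb_bisim (a : Ag) : IsBisim (Mod1 (AP := AP) a) (Mod2 (AP := AP)) Zb := by
  refine ⟨?_, ?_, ?_⟩
  · intro q x y hz
    simp only [Mod1, Mod2, Set.mem_setOf_eq]
    unfold Zb at hz
    omega
  · intro c x y u _ _
    exact ⟨⟨u.val % 2, by omega⟩, trivial, rfl⟩
  · intro c x y u' _ _
    by_cases hc : c = a
    · have key : ∀ (x : Fin 4) (t : Fin 2), ∃ u, Ra4 x u ∧ u.val % 2 = t.val := by
        decide
      obtain ⟨u, h1, h2⟩ := key x u'
      exact ⟨u, Or.inl ⟨hc, h1⟩, h2⟩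
    · have key : ∀ (x : Fin 4) (t : Fin 2), ∃ u, Rb4 x u ∧ u.val % 2 = t.val := by
        decide
      obtain ⟨u, h1, h2⟩ := key x u'
      exact ⟨u, Or.inr ⟨hc, h1⟩, h2⟩

end Expressivity


/-- GLAL is strictly more expressive than PAL:
some GLAL formula is equivalent to no PAL formula. -/
theorem glal_more_expressive_than_pal
    [Fintype Ag] [Nonempty AP] (hAg : ∃ a b : Ag, a ≠ b) :
    ∃ φ : Form AP Ag, ∀ ψ : PForm AP Ag,
      ¬ (∀ (W : Type) (M : KModel AP Ag W), (∀ a : Ag, Equivalence (M.R a)) →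
           ∀ w : W, (sat φ M w ↔ psat ψ M w)) := by
  obtain ⟨a, b, hab⟩ := hAg
  obtain ⟨p⟩ := ‹Nonempty AP›
  refine ⟨dform a b p, fun ψ hψ => ?_⟩
  have h2 : psat ψ (Mod2 (AP := AP) (Ag := Ag)) 0 :=
    (hψ (Fin 2) Mod2 Mod2_equiv 0).1 (sat_dform_M2_true hab p)
  have h1 : psat ψ (Mod1 (AP := AP) a) 0 :=
    (psat_bisim ψ (Mod1 a) Mod2 Zb (Zb_bisim a) (v := 0) (v' := 0) rfl).2 h2
  exact sat_dform_M1_false hab p ((hψ (Fin 4) (Mod1 a) (Mod1_equiv a) 0).2 h1)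
end

section
/- If pointed Kripke models (M,s) and (M',s') are ±-bisimilar, then for every GLAL formula ψ, (M,s) ⊨ ψ if and only if (M',s') ⊨ ψ. That is, ±-bisimilarity preserves modal equivalence in GLAL. -/
variable {AP Ag : Type}

/-- `R_A(w,v)`: `R_a(w,v)` holds for exactly the agents `a ∈ A`. -/
def RA {W : Type} (M : KModel AP Ag W) (A : Set Ag) (w v : W) : Prop :=
  ∀ a : Ag, M.R a w v ↔ a ∈ A

/-- A ±-simulation between two Kripke models: Atoms, Forth and Reach. -/
def IsPMSim {W W' : Type} (M : KModel AP Ag W) (M' : KModel AP Ag W')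
    (S : W → W' → Prop) : Prop :=
  ∀ w w', S w w' →
    (∀ p, w ∈ M.V p ↔ w' ∈ M'.V p) ∧
    (∀ (A : Set Ag) (v : W), RA M A w v → ∃ v', RA M' A w' v' ∧ S v v') ∧
    (∀ v v', S v v' → ∀ a, M.R a w v ↔ M'.R a w' v')

/-- A ±-bisimulation: both it and its converse are ±-simulations. -/
def IsPMBisim {W W' : Type} (M : KModel AP Ag W) (M' : KModel AP Ag W')
    (B : W → W' → Prop) : Prop :=
  IsPMSim M M' B ∧ IsPMSim M' M (fun w' w => B w w')

lemma ck_exists {W W' : Type} {M : KModel AP Ag W} {M' : KModel AP Ag W'} {B : W → W' → Prop}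
    (hS : IsPMSim M M' B) {A : Set Ag} {w v : W} {w' : W'}
    (hww' : B w w') (h : ckRel M A w v) : ∃ v', B v v' ∧ ckRel M' A w' v' := by
  induction h with
  | refl => exact ⟨w', hww', Relation.ReflTransGen.refl⟩
  | @tail u v hchain hstep ih =>
    obtain ⟨u', hBu, hck⟩ := ih
    obtain ⟨a, ha, hR⟩ := hstep
    obtain ⟨v', hRA, hBv⟩ := (hS u u' hBu).2.1 {b | M.R b u v} v (fun b => Iff.rfl)
    exact ⟨v', hBv, hck.tail ⟨a, ha, (hRA a).mpr hR⟩⟩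

lemma ck_spec {W W' : Type} {M : KModel AP Ag W} {M' : KModel AP Ag W'} {B : W → W' → Prop}
    (hS : IsPMSim M M' B)
    (hM : ∀ a, Equivalence (M.R a)) (hM' : ∀ a, Equivalence (M'.R a))
    {A : Set Ag} {a₀ : Ag} (ha₀ : a₀ ∈ A) {w v : W} {w' : W'}
    (hww' : B w w') (h : ckRel M A w v) :
    ∀ v', B v v' → ckRel M' A w' v' := by
  induction h with
  | refl =>
    intro v' hv'
    have hall := (hS w w' hww').2.2 w v' hv' a₀
    exact Relation.ReflTransGen.single ⟨a₀, ha₀, hall.mp ((hM a₀).refl w)⟩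
  | @tail u v hchain hstep ih =>
    intro v' hvv'
    obtain ⟨a, ha, hR⟩ := hstep
    obtain ⟨u', hRA, hBu⟩ := (hS v v' hvv').2.1 {b | M.R b v u} u (fun b => Iff.rfl)
    have hr' : M'.R a v' u' := (hRA a).mpr ((hM a).symm hR)
    exact (ih u' hBu).tail ⟨a, ha, (hM' a).symm hr'⟩

lemma sim_refGen {W W' : Type} (M : KModel AP Ag W) (M' : KModel AP Ag W') (B : W → W' → Prop)
    (hS : IsPMSim M M' B) (A : Set Ag) (X : Set W) (X' : Set W')
    (hX : ∀ v v', B v v' → (v ∈ X ↔ v' ∈ X'))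
    (T : Ag → W → Prop) (T' : Ag → W' → Prop)
    (hT : ∀ a ∈ A, ∀ v v', B v v' → (T a v ↔ T' a v')) :
    IsPMSim (⟨fun a v u => M.R a v u ∧ (a ∈ A → T a v → (v ∈ X ↔ u ∈ X)), M.V⟩ : KModel AP Ag W)
            (⟨fun a v u => M'.R a v u ∧ (a ∈ A → T' a v → (v ∈ X' ↔ u ∈ X')), M'.V⟩ : KModel AP Ag W') B := by
  intro v v' hvv'
  have guard : ∀ (u : W) (u' : W'), B u u' → ∀ a : Ag,
      ((a ∈ A → T a v → (v ∈ X ↔ u ∈ X)) ↔ (a ∈ A → T' a v' → (v' ∈ X' ↔ u' ∈ X'))) := by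
    intro u u' huu' a
    have e1 := hX v v' hvv'
    have e2 := hX u u' huu'
    constructor
    · intro g ha ht'
      exact e1.symm.trans ((g ha ((hT a ha v v' hvv').mpr ht')).trans e2)
    · intro g ha ht
      exact e1.trans ((g ha ((hT a ha v v' hvv').mp ht)).trans e2.symm)
  refine ⟨(hS v v' hvv').1, ?_, ?_⟩
  · intro A₀ u hRA
    obtain ⟨u', hRA', hBu⟩ := (hS v v' hvv').2.1 {b | M.R b v u} u (fun b => Iff.rfl)
    refine ⟨u', fun a => ?_, hBu⟩
    have hiff : (M'.R a v' u' ∧ (a ∈ A → T' a v' → (v' ∈ X' ↔ u' ∈ X'))) ↔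
           (M.R a v u ∧ (a ∈ A → T a v → (v ∈ X ↔ u ∈ X))) := by
      constructor
      · rintro ⟨h1, h2⟩; exact ⟨(hRA' a).mp h1, (guard u u' hBu a).mpr h2⟩
      · rintro ⟨h1, h2⟩; exact ⟨(hRA' a).mpr h1, (guard u u' hBu a).mp h2⟩
    exact hiff.trans (hRA a)
  · intro u u' hBu a
    exact and_congr ((hS v v' hvv').2.2 u u' hBu a) (guard u u' hBu a)

lemma equiv_refGen {W : Type} (M : KModel AP Ag W) (hM : ∀ a, Equivalence (M.R a))
    (A : Set Ag) (X : Set W) (T : Ag → W → Prop)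
    (hTc : ∀ a ∈ A, ∀ v u, M.R a v u → T a v → T a u) :
    ∀ a, Equivalence (fun v u => M.R a v u ∧ (a ∈ A → T a v → (v ∈ X ↔ u ∈ X))) := by
  intro a
  constructor
  · intro v; exact ⟨(hM a).refl v, fun _ _ => Iff.rfl⟩
  · rintro v u ⟨h, g⟩
    exact ⟨(hM a).symm h, fun ha ht => (g ha (hTc a ha u v ((hM a).symm h) ht)).symm⟩
  · rintro v u t ⟨h1, g1⟩ ⟨h2, g2⟩
    exact ⟨(hM a).trans h1 h2, fun ha ht => (g1 ha ht).trans (g2 ha (hTc a ha v u h1 ht))⟩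

theorem glal_key : ∀ (ψ : Form AP Ag) {W W' : Type} (M : KModel AP Ag W) (M' : KModel AP Ag W'),
    (∀ a, Equivalence (M.R a)) → (∀ a, Equivalence (M'.R a)) →
    ∀ B : W → W' → Prop, IsPMBisim M M' B → ∀ w w', B w w' →
    (sat ψ M w ↔ sat ψ M' w') := by
  intro ψ
  induction ψ with
  | atom p =>
    intro W W' M M' hM hM' B hB w w' hww'
    exact (hB.1 w w' hww').1 p
  | neg φ ih =>
    intro W W' M M' hM hM' B hB w w' hww'
    exact not_congr (ih M M' hM hM' B hB w w' hww')
  | and φ ψ ih1 ih2 =>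
    intro W W' M M' hM hM' B hB w w' hww'
    exact and_congr (ih1 M M' hM hM' B hB w w' hww') (ih2 M M' hM hM' B hB w w' hww')
  | ck A φ ih =>
    intro W W' M M' hM hM' B hB w w' hww'
    simp only [sat]
    constructor
    · intro h v' hck'
      obtain ⟨v, hBv, hckM⟩ := ck_exists hB.2 hww' hck'
      exact (ih M M' hM hM' B hB v v' hBv).mp (h v hckM)
    · intro h v hck
      obtain ⟨v', hBv, hck'⟩ := ck_exists hB.1 hww' hck
      exact (ih M M' hM hM' B hB v v' hBv).mpr (h v' hck')
  | annP φ A ψ ihφ ihψ =>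
    intro W W' M M' hM hM' B hB w w' hww'
    simp only [sat]
    set X : Set W := {v | sat φ M v} with hXdef
    set X' : Set W' := {v' | sat φ M' v'} with hX'def
    have hX : ∀ v v', B v v' → (v ∈ X ↔ v' ∈ X') :=
      fun v v' h => ihφ M M' hM hM' B hB v v' h
    have hT : ∀ a ∈ A, ∀ v v', B v v' → (ckRel M A w v ↔ ckRel M' A w' v') :=
      fun a ha v v' h =>
        ⟨fun hc => ck_spec hB.1 hM hM' ha hww' hc v' h,
         fun hc => ck_spec hB.2 hM' hM ha hww' hc v h⟩
    have hBref : IsPMBisim (M.refP w X A) (M'.refP w' X' A) B :=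
      ⟨sim_refGen M M' B hB.1 A X X' hX _ _ hT,
       sim_refGen M' M _ hB.2 A X' X (fun v' v h => (hX v v' h).symm) _ _
         (fun a ha v' v h => (hT a ha v v' h).symm)⟩
    have hEq : ∀ a, Equivalence ((M.refP w X A).R a) :=
      equiv_refGen M hM A X _ (fun a ha v u h ht => ht.tail ⟨a, ha, h⟩)
    have hEq' : ∀ a, Equivalence ((M'.refP w' X' A).R a) :=
      equiv_refGen M' hM' A X' _ (fun a ha v u h ht => ht.tail ⟨a, ha, h⟩)
    have hφiff := ihφ M M' hM hM' B hB w w' hww'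
    have hψiff := ihψ (M.refP w X A) (M'.refP w' X' A) hEq hEq' B hBref w w' hww'
    constructor
    · intro h hφ'; exact hψiff.mp (h (hφiff.mpr hφ'))
    · intro h hφ; exact hψiff.mpr (h (hφiff.mp hφ))
  | annM φ A ψ ihφ ihψ =>
    intro W W' M M' hM hM' B hB w w' hww'
    simp only [sat]
    set X : Set W := {v | sat φ M v} with hXdef
    set X' : Set W' := {v' | sat φ M' v'} with hX'def
    have hX : ∀ v v', B v v' → (v ∈ X ↔ v' ∈ X') :=
      fun v v' h => ihφ M M' hM hM' B hB v v' h
    have hT : ∀ a ∈ A, ∀ v v', B v v' → (M.R a w v ↔ M'.R a w' v') :=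
      fun a _ v v' h => (hB.1 w w' hww').2.2 v v' h a
    have hBref : IsPMBisim (M.refM w X A) (M'.refM w' X' A) B :=
      ⟨sim_refGen M M' B hB.1 A X X' hX _ _ hT,
       sim_refGen M' M _ hB.2 A X' X (fun v' v h => (hX v v' h).symm) _ _
         (fun a ha v' v h => (hT a ha v v' h).symm)⟩
    have hEq : ∀ a, Equivalence ((M.refM w X A).R a) :=
      equiv_refGen M hM A X _ (fun a _ v u h ht => (hM a).trans ht h)
    have hEq' : ∀ a, Equivalence ((M'.refM w' X' A).R a) :=
      equiv_refGen M' hM' A X' _ (fun a _ v u h ht => (hM' a).trans ht h)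
    have hφiff := ihφ M M' hM hM' B hB w w' hww'
    have hψiff := ihψ (M.refM w X A) (M'.refM w' X' A) hEq hEq' B hBref w w' hww'
    constructor
    · intro h hφ'; exact hψiff.mp (h (hφiff.mpr hφ'))
    · intro h hφ; exact hψiff.mpr (h (hφiff.mp hφ))

/-- ±-bisimilar pointed models satisfy the same GLAL formulas. -/
theorem pm_bisim_preserves_glal {W W' : Type} [Fintype Ag]
    (M : KModel AP Ag W) (M' : KModel AP Ag W')
    (hM : ∀ a : Ag, Equivalence (M.R a)) (hM' : ∀ a : Ag, Equivalence (M'.R a))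
    (s : W) (s' : W') (h : ∃ B : W → W' → Prop, IsPMBisim M M' B ∧ B s s') :
    ∀ ψ : Form AP Ag, sat ψ M s ↔ sat ψ M' s' := by
  obtain ⟨B, hB, hss'⟩ := h
  intro ψ
  exact glal_key ψ M M' hM hM' B hB s s' hss'
end

section
/- Assume Ag contains at least two agents. Then epistemic logic with distributed knowledge is not as expressive as GLAL: there exists a GLAL formula φ such that no formula ψ of the language L_eld (epistemic logic with common knowledge and distributed knowledge) satisfies, for every Kripke model M and world w of M, (M,w) ⊨ φ if and only if (M,w) ⊨ ψ. -/
variable {AP Ag : Type}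

/-- Formulas of epistemic logic with common knowledge and distributed knowledge. -/
inductive FormD (AP Ag : Type) : Type
  | atom : AP → FormD AP Ag
  | neg  : FormD AP Ag → FormD AP Ag
  | and  : FormD AP Ag → FormD AP Ag → FormD AP Ag
  | ck   : Set Ag → FormD AP Ag → FormD AP Ag
  | dk   : Set Ag → FormD AP Ag → FormD AP Ag

/-- Satisfaction for epistemic logic with common and distributed knowledge. -/
def satD {W : Type} : FormD AP Ag → KModel AP Ag W → W → Prop
  | .atom p, M, w => w ∈ M.V p
  | .neg φ, M, w => ¬ satD φ M w
  | .and φ ψ, M, w => satD φ M w ∧ satD ψ M w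
  | .ck A φ, M, w => ∀ v, ckRel M A w v → satD φ M v
  | .dk A φ, M, w => ∀ v, (∀ a ∈ A, M.R a w v) → satD φ M v


/-- Relation family for the cycle model of size `n`. -/
def cRel (n : ℕ) (a b : Ag) (c : Ag) (v u : Fin n) : Prop :=
  (c = a ∧ v.val / 2 = u.val / 2) ∨
  (c = b ∧ (v.val + 1) % n / 2 = (u.val + 1) % n / 2) ∨
  (c ≠ a ∧ c ≠ b ∧ v = u)

def CycM (a b : Ag) (n : ℕ) : KModel AP Ag (Fin n) :=
  ⟨cRel n a b, fun _ => {v | v.val % 2 = 0}⟩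

lemma cRel_a {a b : Ag} (hab : a ≠ b) {n} {v u : Fin n} :
    cRel n a b a v u ↔ v.val / 2 = u.val / 2 := by
  simp [cRel, hab]

lemma cRel_b {a b : Ag} (hab : a ≠ b) {n} {v u : Fin n} :
    cRel n a b b v u ↔ (v.val + 1) % n / 2 = (u.val + 1) % n / 2 := by
  simp [cRel, hab.symm]

lemma cRel_other {a b c : Ag} (h1 : c ≠ a) (h2 : c ≠ b) {n} {v u : Fin n} :
    cRel n a b c v u ↔ v = u := by
  simp [cRel, h1, h2]

lemma equiv_congr {α : Type} {R S : α → α → Prop} (h : ∀ v u, R v u ↔ S v u)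
    (hS : Equivalence S) : Equivalence R :=
  ⟨fun x => (h x x).2 (hS.refl x),
   fun hr => (h _ _).2 (hS.symm ((h _ _).1 hr)),
   fun h1 h2 => (h _ _).2 (hS.trans ((h _ _).1 h1) ((h _ _).1 h2))⟩

lemma kernel_equiv {α β : Type} (g : α → β) : Equivalence (fun v u => g v = g u) :=
  ⟨fun _ => rfl, Eq.symm, Eq.trans⟩

lemma cRel_equiv {a b : Ag} (hab : a ≠ b) (n : ℕ) (c : Ag) :
    Equivalence (cRel n a b c) := by
  by_cases h1 : c = a
  · subst h1
    exact equiv_congr (fun v u => cRel_a hab) (kernel_equiv fun v : Fin n => v.val / 2)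
  · by_cases h2 : c = b
    · subst h2
      exact equiv_congr (fun v u => cRel_b hab)
        (kernel_equiv fun v : Fin n => (v.val + 1) % n / 2)
    · exact equiv_congr (fun v u => cRel_other h1 h2) (kernel_equiv id)

def fdown (i : Fin 8) : Fin 4 := ⟨i.val % 4, by omega⟩

lemma forth {a b : Ag} (hab : a ≠ b) (c : Ag) (w v : Fin 8)
    (h : (CycM a b 8 : KModel AP Ag _).R c w v) :
    (CycM a b 4 : KModel AP Ag _).R c (fdown w) (fdown v) := by
  rcases h with ⟨rfl, h⟩ | ⟨rfl, h⟩ | ⟨h1, h2, rfl⟩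
  · exact Or.inl ⟨rfl, by revert h; have := w.isLt; have := v.isLt; simp [fdown]; omega⟩
  · exact Or.inr (Or.inl ⟨rfl, by revert h; have := w.isLt; have := v.isLt; simp [fdown]; omega⟩)
  · exact Or.inr (Or.inr ⟨h1, h2, rfl⟩)

lemma backa : ∀ (w : Fin 8) (u : Fin 4), (fdown w).val / 2 = u.val / 2 →
    ∃ v : Fin 8, w.val / 2 = v.val / 2 ∧ fdown v = u := by decide

lemma backb : ∀ (w : Fin 8) (u : Fin 4),
    ((fdown w).val + 1) % 4 / 2 = (u.val + 1) % 4 / 2 →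
    ∃ v : Fin 8, (w.val + 1) % 8 / 2 = (v.val + 1) % 8 / 2 ∧ fdown v = u := by decide

lemma inter_id : ∀ (x u : Fin 4), x.val / 2 = u.val / 2 →
    (x.val + 1) % 4 / 2 = (u.val + 1) % 4 / 2 → x = u := by decide

lemma back {a b : Ag} (hab : a ≠ b) (c : Ag) (w : Fin 8) (u : Fin 4)
    (h : (CycM a b 4 : KModel AP Ag _).R c (fdown w) u) :
    ∃ v : Fin 8, (CycM a b 8 : KModel AP Ag _).R c w v ∧ fdown v = u := by
  rcases h with ⟨rfl, h⟩ | ⟨rfl, h⟩ | ⟨h1, h2, h3⟩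
  · obtain ⟨v, hv, hfv⟩ := backa w u h
    exact ⟨v, Or.inl ⟨rfl, hv⟩, hfv⟩
  · obtain ⟨v, hv, hfv⟩ := backb w u h
    exact ⟨v, Or.inr (Or.inl ⟨rfl, hv⟩), hfv⟩
  · exact ⟨w, Or.inr (Or.inr ⟨h1, h2, rfl⟩), h3⟩

lemma dkback {a b : Ag} (hab : a ≠ b) (A : Set Ag) (w : Fin 8) (u : Fin 4)
    (h : ∀ c ∈ A, (CycM a b 4 : KModel AP Ag _).R c (fdown w) u) :
    ∃ v : Fin 8, (∀ c ∈ A, (CycM a b 8 : KModel AP Ag _).R c w v) ∧ fdown v = u := by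
  by_cases hex : ∃ c ∈ A, c ≠ a ∧ c ≠ b
  · obtain ⟨c, hcA, hc1, hc2⟩ := hex
    have := (cRel_other hc1 hc2).1 (h c hcA)
    exact ⟨w, fun c' hc' => (cRel_equiv hab 8 c').refl w, this⟩
  · push_neg at hex
    have hmem : ∀ c ∈ A, c = a ∨ c = b := by
      intro c hc
      by_cases h1 : c = a
      · exact Or.inl h1
      · exact Or.inr (hex c hc h1)
    by_cases haA : a ∈ A
    · by_cases hbA : b ∈ A
      · have ha' := (cRel_a hab).1 (h a haA)
        have hb' := (cRel_b hab).1 (h b hbA)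
        exact ⟨w, fun c' hc' => (cRel_equiv hab 8 c').refl w, inter_id _ _ ha' hb'⟩
      · have ha' := (cRel_a hab).1 (h a haA)
        obtain ⟨v, hv, hfv⟩ := backa w u ha'
        refine ⟨v, fun c hc => ?_, hfv⟩
        rcases hmem c hc with rfl | rfl
        · exact Or.inl ⟨rfl, hv⟩
        · exact absurd hc hbA
    · by_cases hbA : b ∈ A
      · have hb' := (cRel_b hab).1 (h b hbA)
        obtain ⟨v, hv, hfv⟩ := backb w u hb'
        refine ⟨v, fun c hc => ?_, hfv⟩
        rcases hmem c hc with rfl | rfl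
        · exact absurd hc haA
        · exact Or.inr (Or.inl ⟨rfl, hv⟩)
      · refine ⟨⟨u.val, by omega⟩, fun c hc => ?_, by simp [fdown, Fin.ext_iff, Nat.mod_eq_of_lt u.isLt]⟩
        rcases hmem c hc with rfl | rfl
        · exact absurd hc haA
        · exact absurd hc hbA

lemma ckforth {a b : Ag} (hab : a ≠ b) (A : Set Ag) (w v : Fin 8)
    (h : ckRel (CycM a b 8 : KModel AP Ag _) A w v) :
    ckRel (CycM a b 4 : KModel AP Ag _) A (fdown w) (fdown v) := by
  induction h with
  | refl => exact Relation.ReflTransGen.refl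
  | tail _ hstep ih =>
      obtain ⟨c, hc, hr⟩ := hstep
      exact ih.tail ⟨c, hc, forth hab c _ _ hr⟩

lemma ckback {a b : Ag} (hab : a ≠ b) (A : Set Ag) (w : Fin 8) (u : Fin 4)
    (h : ckRel (CycM a b 4 : KModel AP Ag _) A (fdown w) u) :
    ∃ v : Fin 8, ckRel (CycM a b 8 : KModel AP Ag _) A w v ∧ fdown v = u := by
  induction h with
  | refl => exact ⟨w, Relation.ReflTransGen.refl, rfl⟩
  | tail _ hstep ih =>
      obtain ⟨v, hv, rfl⟩ := ih
      obtain ⟨c, hc, hr⟩ := hstep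
      obtain ⟨v', hv', hfv'⟩ := back hab c v _ hr
      exact ⟨v', hv.tail ⟨c, hc, hv'⟩, hfv'⟩

lemma transfer_s19 {a b : Ag} (hab : a ≠ b) (ψ : FormD AP Ag) :
    ∀ w : Fin 8, satD ψ (CycM a b 8) w ↔ satD ψ (CycM a b 4) (fdown w) := by
  induction ψ with
  | atom p =>
      intro w
      show w.val % 2 = 0 ↔ (fdown w).val % 2 = 0
      have := w.isLt
      simp [fdown]
  | neg φ ih => intro w; simp only [satD]; exact not_congr (ih w)
  | and φ χ ih1 ih2 => intro w; simp only [satD]; exact and_congr (ih1 w) (ih2 w)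
  | ck A φ ih =>
      intro w
      simp only [satD]
      constructor
      · intro h u hu
        obtain ⟨v, hv, rfl⟩ := ckback hab A w u hu
        exact (ih v).1 (h v hv)
      · intro h v hv
        exact (ih v).2 (h (fdown v) (ckforth hab A w v hv))
  | dk A φ ih =>
      intro w
      simp only [satD]
      constructor
      · intro h u hu
        obtain ⟨v, hv, rfl⟩ := dkback hab A w u hu
        exact (ih v).1 (h v hv)
      · intro h v hv
        exact (ih v).2 (h (fdown v) (fun c hc => forth hab c w v (hv c hc)))

lemma refM_equiv {W : Type} (M : KModel AP Ag W) (w : W) (X : Set W) (A : Set Ag)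
    (c : Ag) (h : Equivalence (M.R c)) : Equivalence ((M.refM w X A).R c) := by
  constructor
  · intro v; exact ⟨h.refl v, fun _ _ => Iff.rfl⟩
  · rintro v u ⟨h1, h2⟩
    exact ⟨h.symm h1, fun hc hwu => (h2 hc (h.trans hwu (h.symm h1))).symm⟩
  · rintro v u t ⟨h1, h2⟩ ⟨h3, h4⟩
    exact ⟨h.trans h1 h3, fun hc hwv => (h2 hc hwv).trans (h4 hc (h.trans hwv h1))⟩

lemma ckRel_single {W : Type} (M : KModel AP Ag W) (c : Ag)
    (h : Equivalence (M.R c)) (w v : W) : ckRel M {c} w v ↔ M.R c w v := by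
  constructor
  · intro hck
    induction hck with
    | refl => exact h.refl w
    | tail _ hstep ih =>
        obtain ⟨c', hc', hr⟩ := hstep
        rw [Set.mem_singleton_iff] at hc'
        subst hc'
        exact h.trans ih hr
  · intro hr
    exact Relation.ReflTransGen.single ⟨c, rfl, hr⟩

/-- `◇_c φ` -/
def dia (c : Ag) (φ : Form AP Ag) : Form AP Ag := .neg (.ck {c} (.neg φ))

/-- The distinguishing GLAL formula: `[p]⁻_{a} ◇_b ◇_a ◇_b (¬p ∧ K_a ¬p)`. -/
def phi (a b : Ag) (p : AP) : Form AP Ag :=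
  .annM (.atom p) {a}
    (dia b (dia a (dia b (.and (.neg (.atom p)) (.ck {a} (.neg (.atom p)))))))

/-- The refinement of the cycle model by the local announcement of `p` to `{a}` at `w0`. -/
def refMod (a b : Ag) (p : AP) (n : ℕ) (w0 : Fin n) : KModel AP Ag (Fin n) :=
  (CycM a b n).refM w0 {v | sat (Form.atom p) (CycM a b n) v} {a}

lemma refMod_Ra {a b : Ag} (hab : a ≠ b) (p : AP) {n : ℕ} (w0 v u : Fin n) :
    (refMod a b p n w0 : KModel AP Ag _).R a v u ↔
      (v.val / 2 = u.val / 2 ∧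
        (w0.val / 2 = v.val / 2 → (v.val % 2 = 0 ↔ u.val % 2 = 0))) := by
  show (cRel n a b a v u ∧ (a ∈ ({a} : Set Ag) → cRel n a b a w0 v → _)) ↔ _
  simp [cRel_a hab, sat, CycM]

lemma refMod_Rb {a b : Ag} (hab : a ≠ b) (p : AP) {n : ℕ} (w0 v u : Fin n) :
    (refMod a b p n w0 : KModel AP Ag _).R b v u ↔
      (v.val + 1) % n / 2 = (u.val + 1) % n / 2 := by
  show (cRel n a b b v u ∧ (b ∈ ({a} : Set Ag) → _ → _)) ↔ _
  simp [cRel_b hab, hab.symm]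

lemma refMod_V {a b : Ag} (p q : AP) {n : ℕ} (w0 v : Fin n) :
    (v ∈ (refMod a b p n w0 : KModel AP Ag _).V q) ↔ v.val % 2 = 0 := Iff.rfl

lemma refMod_equiv {a b : Ag} (hab : a ≠ b) (p : AP) {n : ℕ} (w0 : Fin n) (c : Ag) :
    Equivalence ((refMod a b p n w0 : KModel AP Ag _).R c) :=
  refM_equiv _ _ _ _ c (cRel_equiv hab n c)

lemma eval4 {a b : Ag} (hab : a ≠ b) (p : AP) :
    sat (phi a b p) (CycM a b 4 : KModel AP Ag _) (0 : Fin 4) := by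
  intro _
  show sat (dia b (dia a (dia b (.and (.neg (.atom p))
      (.ck {a} (.neg (.atom p))))))) (refMod a b p 4 0) (0 : Fin 4)
  have hEq := refMod_equiv (AP := AP) hab p (0 : Fin 4)
  have hck : ∀ (c : Ag) (w v : Fin 4), ckRel (refMod a b p 4 0 : KModel AP Ag _) {c} w v ↔
      (refMod a b p 4 0 : KModel AP Ag _).R c w v :=
    fun c w v => ckRel_single _ c (hEq c) w v
  simp only [dia, sat, hck, refMod_Ra hab, refMod_Rb hab, refMod_V]
  decide

lemma eval8 {a b : Ag} (hab : a ≠ b) (p : AP) :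
    ¬ sat (phi a b p) (CycM a b 8 : KModel AP Ag _) (0 : Fin 8) := by
  intro h
  have h3 : sat (dia b (dia a (dia b (.and (.neg (.atom p))
      (.ck {a} (.neg (.atom p))))))) (refMod a b p 8 0) (0 : Fin 8) :=
    h (by decide : ((0 : Fin 8).val % 2 = 0))
  have hEq := refMod_equiv (AP := AP) hab p (0 : Fin 8)
  have hck : ∀ (c : Ag) (w v : Fin 8), ckRel (refMod a b p 8 0 : KModel AP Ag _) {c} w v ↔
      (refMod a b p 8 0 : KModel AP Ag _).R c w v :=
    fun c w v => ckRel_single _ c (hEq c) w v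
  simp only [dia, sat, hck, refMod_Ra hab, refMod_Rb hab, refMod_V] at h3
  revert h3
  decide

/-- epistemic logic with common and distributed knowledge is not
as expressive as GLAL: some GLAL formula is equivalent to no `L_eld` formula. -/
theorem glal_more_expressive_than_eld
    [Fintype Ag] [Nonempty AP] (hAg : ∃ a b : Ag, a ≠ b) :
    ∃ φ : Form AP Ag, ∀ ψ : FormD AP Ag,
      ¬ (∀ (W : Type) (M : KModel AP Ag W), (∀ a : Ag, Equivalence (M.R a)) →
           ∀ w : W, (sat φ M w ↔ satD ψ M w)) := by
  obtain ⟨a, b, hab⟩ := hAg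
  have p : AP := Classical.arbitrary AP
  refine ⟨phi a b p, ?_⟩
  intro ψ H
  have h4 : satD ψ (CycM a b 4 : KModel AP Ag _) (0 : Fin 4) :=
    (H (Fin 4) (CycM a b 4) (fun c => cRel_equiv hab 4 c) 0).1 (eval4 hab p)
  have h8 : satD ψ (CycM a b 8 : KModel AP Ag _) (0 : Fin 8) :=
    (transfer_s19 hab ψ 0).2 (by simpa [show fdown 0 = 0 by decide] using h4)
  exact eval8 hab p ((H (Fin 8) (CycM a b 8) (fun c => cRel_equiv hab 8 c) 0).2 h8)
end
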